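/- arXiv:1411.3278 — 10 statements merged into one kernel-verified Lean document; each statement's English description precedes it below -/
import Mathlib

section
/- If A and B are finite abelian groups and there exists a map f : A × B → C into a finite cyclic group C which is a homomorphism in each variable separately and nondegenerate (f(a,B)=1 implies a=1, and f(A,b)=1 implies b=1), then A is isomorphic to B. -/
open Monoid in
/-- Embed a finite cyclic group into ℂˣ. -/
lemma cyclic_embeds (C : Type*) [Group C] [Finite C] [IsCyclic C] :
    ∃ ι : C →* ℂˣ, Function.Injective ι := by
  have : NeZero (Nat.card C) := ⟨Nat.card_pos.ne'⟩
  obtain ⟨ζ, hζ⟩ := HasEnoughRootsOfUnity.exists_primitiveRoot ℂ (Nat.card C)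
  have hζu : IsPrimitiveRoot (hζ.toRootsOfUnity : ℂˣ) (Nat.card C) :=
    IsPrimitiveRoot.coe_units_iff.mp (by simpa using hζ)
  obtain ⟨g, hg⟩ := IsCyclic.exists_generator (α := C)
  have hord : orderOf (hζ.toRootsOfUnity : ℂˣ) ∣ orderOf g := by
    rw [← hζu.eq_orderOf, orderOf_eq_card_of_forall_mem_zpowers hg]
  refine ⟨monoidHomOfForallMemZpowers hg hord, ?_⟩
  have hgen : IsPrimitiveRoot ((monoidHomOfForallMemZpowers hg hord) g) (Nat.card C) := by
    rwa [monoidHomOfForallMemZpowers_apply_gen hg hord]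
  rw [injective_iff_map_eq_one]
  intro a ha
  obtain ⟨k, hk⟩ := Submonoid.mem_powers_iff _ _ |>.mp (mem_powers_iff_mem_zpowers.mpr (hg a))
  rw [← hk, map_pow] at ha
  obtain ⟨l, rfl⟩ := (hgen.pow_eq_one_iff_dvd k).mp ha
  rw [← hk, pow_mul]
  simp [pow_card_eq_one']


/-- If `A` and `B` are finite abelian groups and there is a nondegenerate bimultiplicative
map `f : A × B → C` into a finite cyclic group `C`, then `A ≅ B`. -/
theorem stmt_0 {A B C : Type*} [CommGroup A] [Finite A] [CommGroup B] [Finite B]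
    [Group C] [Finite C] [IsCyclic C] (f : A → B → C)
    (hmul₁ : ∀ (a : A) (b₁ b₂ : B), f a (b₁ * b₂) = f a b₁ * f a b₂)
    (hmul₂ : ∀ (a₁ a₂ : A) (b : B), f (a₁ * a₂) b = f a₁ b * f a₂ b)
    (hndA : ∀ a : A, (∀ b : B, f a b = 1) → a = 1)
    (hndB : ∀ b : B, (∀ a : A, f a b = 1) → b = 1) :
    Nonempty (A ≃* B) := by
  obtain ⟨ι, hι⟩ := cyclic_embeds C
  have hA1 : ∀ a : A, f a 1 = 1 := fun a => by
    have := hmul₁ a 1 1; rw [mul_one] at this; exact (left_eq_mul.mp this)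
  have hB1 : ∀ b : B, f 1 b = 1 := fun b => by
    have := hmul₂ 1 1 b; rw [mul_one] at this; exact (left_eq_mul.mp this)
  let F : A →* (B →* ℂˣ) :=
    { toFun := fun a => { toFun := fun b => ι (f a b)
                          map_one' := by simp [hA1]
                          map_mul' := fun b₁ b₂ => by
                            show ι (f a (b₁ * b₂)) = ι (f a b₁) * ι (f a b₂)
                            rw [hmul₁, map_mul] }
      map_one' := by ext b; simp [hB1]
      map_mul' := fun a₁ a₂ => by
        ext b
        simp only [MonoidHom.coe_mk, OneHom.coe_mk, MonoidHom.mul_apply, hmul₂ a₁ a₂ b,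
          map_mul, Units.val_mul] }
  let G : B →* (A →* ℂˣ) :=
    { toFun := fun b => { toFun := fun a => ι (f a b)
                          map_one' := by simp [hB1]
                          map_mul' := fun a₁ a₂ => by
                            show ι (f (a₁ * a₂) b) = ι (f a₁ b) * ι (f a₂ b)
                            rw [hmul₂, map_mul] }
      map_one' := by ext a; simp [hA1]
      map_mul' := fun b₁ b₂ => by
        ext a
        simp only [MonoidHom.coe_mk, OneHom.coe_mk, MonoidHom.mul_apply, hmul₁ a b₁ b₂,
          map_mul, Units.val_mul] }
  have hF : Function.Injective F := by
    rw [injective_iff_map_eq_one]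
    intro a ha
    refine hndA a fun b => ?_
    have : ι (f a b) = 1 := by simpa [F] using DFunLike.congr_fun ha b
    exact hι (by simpa using this)
  have hG : Function.Injective G := by
    rw [injective_iff_map_eq_one]
    intro b hb
    refine hndB b fun a => ?_
    have : ι (f a b) = 1 := by simpa [G] using DFunLike.congr_fun hb a
    exact hι (by simpa using this)
  haveI : NeZero (Monoid.exponent A) :=
    ⟨(Monoid.exponent_pos.mpr Monoid.ExponentExists.of_finite).ne'⟩
  haveI : NeZero (Monoid.exponent B) :=
    ⟨(Monoid.exponent_pos.mpr Monoid.ExponentExists.of_finite).ne'⟩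
  obtain ⟨eA⟩ := CommGroup.monoidHom_mulEquiv_of_hasEnoughRootsOfUnity A ℂ
  obtain ⟨eB⟩ := CommGroup.monoidHom_mulEquiv_of_hasEnoughRootsOfUnity B ℂ
  haveI : Finite (B →* ℂˣ) := Finite.of_equiv B eB.symm.toEquiv
  haveI : Finite (A →* ℂˣ) := Finite.of_equiv A eA.symm.toEquiv
  have hcardA : Nat.card A ≤ Nat.card B := by
    calc Nat.card A ≤ Nat.card (B →* ℂˣ) := Nat.card_le_card_of_injective F hF
      _ = Nat.card B := Nat.card_congr eB.toEquiv
  have hcardB : Nat.card B ≤ Nat.card A := by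
    calc Nat.card B ≤ Nat.card (A →* ℂˣ) := Nat.card_le_card_of_injective G hG
      _ = Nat.card A := Nat.card_congr eA.toEquiv
  have hbij : Function.Bijective F :=
    hF.bijective_of_nat_card_le (by rw [Nat.card_congr eB.toEquiv]; omega)
  exact ⟨(MulEquiv.ofBijective F hbij).trans eB⟩
end

section
/- If P is a Camina p-group, then the quotient P/P' is an elementary abelian p-group, i.e., every element of P/P' has order dividing p. -/
open scoped Pointwise

/-- A Camina group: a nonabelian group in which every coset of the derived subgroup
other than the derived subgroup itself is a single conjugacy class. -/
def IsCamina (P : Type*) [Group P] : Prop :=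
  (¬ ∀ a b : P, a * b = b * a) ∧
  ∀ x : P, x ∉ commutator P → {y : P | IsConj x y} = x • (commutator P : Set P)

section Aux

variable {P : Type*} [Group P] [Finite P]

/-- Orbit–stabilizer for the conjugation action, in `Nat.card` form. -/
lemma camina_orbit_stab (a : P) :
    Nat.card (MulAction.orbit (ConjAct P) a) *
      Nat.card (MulAction.stabilizer (ConjAct P) a) = Nat.card P := by
  classical
  have hfin : Finite (ConjAct P) := ‹Finite P›
  cases nonempty_fintype (ConjAct P)
  have h1 : Fintype ↥(MulAction.orbit (ConjAct P) a) := Fintype.ofFinite _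
  have h2 : Fintype ↥(MulAction.stabilizer (ConjAct P) a) := Fintype.ofFinite _
  have hPC : Nat.card P = Nat.card (ConjAct P) := Nat.card_congr ConjAct.toConjAct.toEquiv
  rw [hPC]
  simp only [Nat.card_eq_fintype_card]
  exact MulAction.card_orbit_mul_card_stabilizer_eq_card_group (ConjAct P) a

lemma camina_orbit_eq (hCam : IsCamina P) {a : P} (ha : a ∉ commutator P) :
    MulAction.orbit (ConjAct P) a = a • (commutator P : Set P) := by
  rw [← hCam.2 a ha]
  ext y
  simp only [ConjAct.mem_orbit_conjAct, Set.mem_setOf_eq]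
  exact isConj_comm

lemma camina_stab_card (hCam : IsCamina P) {a : P} (ha : a ∉ commutator P) :
    Nat.card (MulAction.orbit (ConjAct P) a) = Nat.card (commutator P) := by
  rw [camina_orbit_eq hCam ha]
  exact Set.natCard_smul_set a _

open commutatorElement in
/-- In a Camina group the center is contained in the derived subgroup. -/
lemma camina_center_le (hCam : IsCamina P) : Subgroup.center P ≤ commutator P := by
  intro c hc
  by_contra hcn
  have hset := hCam.2 c hcn
  apply hCam.1
  intro a b
  have hcomm : ∀ z ∈ commutator P, z = (1 : P) := by
    intro z hz
    have hmem : c * z ∈ c • (commutator P : Set P) := ⟨z, hz, rfl⟩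
    rw [← hset] at hmem
    obtain ⟨g, hg⟩ := isConj_iff.mp hmem
    have hgc : g * c * g⁻¹ = c := by
      rw [Subgroup.mem_center_iff.mp hc g]
      group
    rw [hgc] at hg
    exact left_eq_mul.mp hg
  have : ⁅a, b⁆ = 1 := hcomm _ (Subgroup.commutator_mem_commutator (Subgroup.mem_top a)
    (Subgroup.mem_top b))
  exact (commutatorElement_eq_one_iff_mul_comm.mp this)

end Aux

/-- If `P` is a Camina `p`-group, then `P/P'` is elementary abelian. -/
theorem stmt_2 {p : ℕ} [Fact p.Prime] {P : Type*} [Group P] [Finite P]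
    (hP : IsPGroup p P) (hCam : IsCamina P) :
    ∀ x : P ⧸ commutator P, x ^ p = 1 := by
  have hp : p.Prime := Fact.out
  -- reduce to: every p-th power lies in the commutator subgroup
  have key : ∀ x : P, x ^ p ∈ commutator P := by
    intro x
    by_cases hx : x ∈ commutator P
    · exact pow_mem hx p
    by_contra hxp
    -- P is nontrivial (it is nonabelian)
    have hnt : Nontrivial P := by
      by_contra h
      rw [not_nontrivial_iff_subsingleton] at h
      exact hCam.1 fun a b => Subsingleton.elim _ _
    -- the center is a nontrivial p-group, find a central element of order p
    have hZnt : Nontrivial (Subgroup.center P) := IsPGroup.center_nontrivial hP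
    have hZp : IsPGroup p (Subgroup.center P) := hP.to_subgroup _
    obtain ⟨n, hn⟩ := IsPGroup.iff_card.mp hZp
    have hn1 : 1 ≤ n := by
      by_contra h
      have hn0 : n = 0 := by omega
      rw [hn0, pow_zero] at hn
      exact (Finite.one_lt_card (α := Subgroup.center P)).ne' hn
    have hdvd : p ∣ Nat.card (Subgroup.center P) := hn ▸ dvd_pow_self p (by omega)
    obtain ⟨c₀, hc₀⟩ := exists_prime_orderOf_dvd_card' p hdvd
    set c : P := (c₀ : P) with hcdef
    have hcord : orderOf c = p := by rw [hcdef, Subgroup.orderOf_coe, hc₀]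
    have hcZ : c ∈ Subgroup.center P := c₀.2
    have hcC : c ∈ commutator P := camina_center_le hCam hcZ
    have hc1 : c ≠ 1 := by
      intro h
      rw [h, orderOf_one] at hcord
      exact hp.ne_one hcord.symm
    -- x is conjugate to x * c
    have hmem : x * c ∈ {y : P | IsConj x y} := by
      rw [hCam.2 x hx]
      exact ⟨c, hcC, rfl⟩
    obtain ⟨g, hg⟩ := isConj_iff.mp hmem
    -- hence g centralizes x ^ p
    have hgp : g * x ^ p * g⁻¹ = x ^ p := by
      have hcj : (g * x * g⁻¹) ^ p = g * x ^ p * g⁻¹ := conj_pow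
      rw [hg] at hcj
      have hco : Commute x c := Subgroup.mem_center_iff.mp hcZ x
      have hcp : c ^ p = 1 := by rw [← hcord]; exact pow_orderOf_eq_one c
      rw [hco.mul_pow, hcp, mul_one] at hcj
      exact hcj.symm
    -- stabilizers of x and x^p have the same cardinality
    have hle : MulAction.stabilizer (ConjAct P) x ≤ MulAction.stabilizer (ConjAct P) (x ^ p) := by
      intro h hh
      have hh' : ConjAct.ofConjAct h * x * (ConjAct.ofConjAct h)⁻¹ = x := hh
      show h • x ^ p = x ^ p
      rw [ConjAct.smul_def, ← conj_pow, hh']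
    have hcards : Nat.card (MulAction.stabilizer (ConjAct P) (x ^ p)) ≤
        Nat.card (MulAction.stabilizer (ConjAct P) x) := by
      have e1 := camina_orbit_stab x
      have e2 := camina_orbit_stab (x ^ p)
      rw [camina_stab_card hCam hx] at e1
      rw [camina_stab_card hCam hxp] at e2
      have := Nat.eq_of_mul_eq_mul_left (Nat.card_pos) (e1.trans e2.symm)
      exact this.ge
    have hfin : Finite (ConjAct P) := ‹Finite P›
    have heq : MulAction.stabilizer (ConjAct P) x = MulAction.stabilizer (ConjAct P) (x ^ p) :=
      Subgroup.eq_of_le_of_card_ge hle hcards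
    -- g stabilizes x^p, hence x, hence c = 1, contradiction
    have hgstab : ConjAct.toConjAct g ∈ MulAction.stabilizer (ConjAct P) (x ^ p) := by
      show ConjAct.toConjAct g • x ^ p = x ^ p
      rw [ConjAct.smul_def, ConjAct.ofConjAct_toConjAct]
      exact hgp
    rw [← heq] at hgstab
    have : g * x * g⁻¹ = x := by
      have := hgstab
      rwa [MulAction.mem_stabilizer_iff, ConjAct.smul_def, ConjAct.ofConjAct_toConjAct] at this
    rw [hg] at this
    exact hc1 (by simpa using this)
  intro x
  obtain ⟨y, rfl⟩ := QuotientGroup.mk_surjective x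
  rw [← QuotientGroup.mk_pow]
  exact (QuotientGroup.eq_one_iff _).mpr (key y)
end

section
/- If P is a Camina p-group of nilpotence class 2, then |P : P'| > |P'|. -/
open scoped Pointwise

open scoped commutatorElement

/-- If `P` is a Camina `p`-group of nilpotence class 2, then `|P : P'| > |P'|`. -/
theorem stmt_3 {p : ℕ} [Fact p.Prime] {P : Type*} [Group P] [Finite P]
    (hP : IsPGroup p P) (hCam : IsCamina P)
    (hclass2 : commutator P ≤ Subgroup.center P) :
    Nat.card (commutator P) < (commutator P).index := by
  obtain ⟨hna, hconj⟩ := hCam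
  -- the derived subgroup is proper
  have hne : commutator P ≠ ⊤ := by
    intro h
    apply hna
    intro a b
    have hb : b ∈ Subgroup.center P := hclass2 (h ▸ Subgroup.mem_top b)
    exact Subgroup.mem_center_iff.mp hb a
  obtain ⟨x, -, hx⟩ := SetLike.exists_of_lt (lt_of_le_of_ne (le_top : commutator P ≤ ⊤) hne)
  -- commutators with x are central
  have hcen : ∀ g : P, ⁅g, x⁆ ∈ Subgroup.center P := fun g =>
    hclass2 (Subgroup.commutator_mem_commutator (Subgroup.mem_top g) (Subgroup.mem_top x))
  -- g ↦ ⁅g, x⁆ is a homomorphism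
  have hf : ∀ a b : P, ⁅a * b, x⁆ = ⁅a, x⁆ * ⁅b, x⁆ := by
    intro a b
    have hc := fun g => Subgroup.mem_center_iff.mp (hcen b) g
    simp only [commutatorElement_def] at hc ⊢
    have h1 : a * b * x * (a * b)⁻¹ * x⁻¹ = a * (b * x * b⁻¹ * x⁻¹) * (x * a⁻¹ * x⁻¹) := by
      group
    rw [h1, hc a, hc (a * x * a⁻¹ * x⁻¹)]
    group
  let f : P →* P := MonoidHom.mk' (fun g => ⁅g, x⁆) hf
  -- f has range exactly the derived subgroup
  have hrange : f.range = commutator P := by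
    apply le_antisymm
    · rintro _ ⟨g, rfl⟩
      exact Subgroup.commutator_mem_commutator (Subgroup.mem_top g) (Subgroup.mem_top x)
    · intro c hc
      have hmem : x * c ∈ {y : P | IsConj x y} := by
        rw [hconj x hx]
        exact ⟨c, hc, rfl⟩
      obtain ⟨g, hg⟩ := isConj_iff.mp hmem
      refine ⟨g, ?_⟩
      have hcc := Subgroup.mem_center_iff.mp (hclass2 hc)
      show ⁅g, x⁆ = c
      rw [commutatorElement_def, hg, mul_assoc, ← hcc x⁻¹]
      group
  -- the kernel strictly contains the derived subgroup
  have hker : commutator P < f.ker := by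
    refine SetLike.lt_iff_le_and_exists.mpr ⟨?_, x, ?_, hx⟩
    · intro c hc
      show ⁅c, x⁆ = 1
      rw [commutatorElement_eq_one_iff_mul_comm]
      exact Subgroup.mem_center_iff.mp (hclass2 hc) x |>.symm
    · show ⁅x, x⁆ = 1
      simp
  -- counting
  have hcard : Nat.card (commutator P) = f.ker.index := by
    rw [← hrange]
    have := Nat.card_congr (QuotientGroup.quotientKerEquivRange f).toEquiv
    rw [Subgroup.index, ← this]
  calc Nat.card (commutator P) = f.ker.index := hcard
    _ < (commutator P).index := Subgroup.index_strictAnti hker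
end

section
/- Let P be a Camina p-group and x ∈ P with x^p ∉ P'. Then C_P(x) = C_P(x^p). -/
open scoped Pointwise

/-- If `P` is a Camina `p`-group and `x ∈ P` with `x^p ∉ P'`, then
`C_P(x) = C_P(x^p)`. -/
theorem stmt_5 {p : ℕ} [Fact p.Prime] {P : Type*} [Group P] [Finite P]
    (hP : IsPGroup p P) (hCam : IsCamina P)
    (x : P) (hx : x ^ p ∉ commutator P) :
    Subgroup.centralizer {x} = Subgroup.centralizer {x ^ p} := by
  have hx' : x ∉ commutator P := fun h => hx (pow_mem h p)
  -- key: for y ∉ P', |C(y)| * |P'| = |P|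
  have key : ∀ y : P, y ∉ commutator P →
      Nat.card (Subgroup.centralizer ({y} : Set P)) * Nat.card (commutator P) = Nat.card P := by
    intro y hy
    have h1 : (MulAction.orbit (ConjAct P) y : Set P) = y • (commutator P : Set P) := by
      rw [← hCam.2 y hy]
      ext g
      simp only [Set.mem_setOf_eq, SetLike.mem_coe]
      rw [show (g ∈ MulAction.orbit (ConjAct P) y) ↔ IsConj g y from
        ConjAct.mem_orbit_conjAct, isConj_comm]
    have h2 : Nat.card (MulAction.orbit (ConjAct P) y) = Nat.card (commutator P) := by
      rw [h1, Set.natCard_smul_set]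
      rfl
    have h3 : Nat.card (Subgroup.centralizer ({y} : Set P)) =
        Nat.card (MulAction.stabilizer (ConjAct P) y) := by
      rw [Subgroup.centralizer_eq_comap_stabilizer]
      exact Nat.card_congr (ConjAct.toConjAct.toEquiv.subtypeEquiv (fun a => Iff.rfl))
    have h4 := Nat.card_congr (MulAction.orbitProdStabilizerEquivGroup (ConjAct P) y)
    rw [Nat.card_prod, h2] at h4
    rw [h3, mul_comm, h4]
    exact Nat.card_congr ConjAct.ofConjAct.toEquiv
  have hle : Subgroup.centralizer ({x} : Set P) ≤ Subgroup.centralizer ({x ^ p} : Set P) := by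
    intro g hg
    rw [Subgroup.mem_centralizer_iff] at hg ⊢
    intro h hh
    rw [Set.mem_singleton_iff] at hh
    subst hh
    have := hg x rfl
    exact Commute.pow_left this p
  refine Subgroup.eq_of_le_of_card_ge hle ?_
  have h1 := key x hx'
  have h2 := key (x ^ p) hx
  have hc : (0 : ℕ) < Nat.card (commutator P) := Nat.card_pos
  exact le_of_eq (Nat.eq_of_mul_eq_mul_right hc (h2.trans h1.symm))
end

section
/- If P is a Camina p-group of nilpotence class 3, then the subgroup [P',P] is elementary abelian: every element of [P',P] has order dividing p. -/
open scoped Pointwise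

/-- Central elements of `p`-th power one form a subgroup. -/
private def centerPow (G : Type*) [Group G] (p : ℕ) : Subgroup G where
  carrier := {x | x ∈ Subgroup.center G ∧ x ^ p = 1}
  one_mem' := ⟨Subgroup.one_mem _, one_pow p⟩
  mul_mem' := fun {a b} ha hb => by
    have hcab : Commute a b := (Subgroup.mem_center_iff.mp ha.1 b).symm
    exact ⟨Subgroup.mul_mem _ ha.1 hb.1, by rw [hcab.mul_pow, ha.2, hb.2, one_mul]⟩
  inv_mem' := fun {a} ha => ⟨Subgroup.inv_mem _ ha.1, by rw [inv_pow, ha.2, inv_one]⟩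

open scoped commutatorElement in
private lemma comm_pow_left {G : Type*} [Group G]
    (hc : ⁅commutator G, (⊤ : Subgroup G)⁆ ≤ Subgroup.center G)
    {a : G} (ha : a ∈ commutator G) (g : G) :
    ∀ n : ℕ, ⁅a ^ n, g⁆ = ⁅a, g⁆ ^ n := by
  intro n
  induction n with
  | zero => simp
  | succ n ih =>
    have hcen : ⁅a ^ n, g⁆ ∈ Subgroup.center G :=
      hc (Subgroup.commutator_mem_commutator (pow_mem ha n) (Subgroup.mem_top g))
    have h1 : ⁅a ^ (n + 1), g⁆ = a * ⁅a ^ n, g⁆ * a⁻¹ * ⁅a, g⁆ := by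
      simp only [commutatorElement_def]; group
    rw [h1, Subgroup.mem_center_iff.mp hcen a, mul_inv_cancel_right, ih, ← pow_succ]

/-- In a (class ≤ 2) Camina-like finite `p`-group, the derived subgroup has exponent `p`. -/
private lemma camina_class2_exponent {p : ℕ} [Fact p.Prime] {Q : Type*} [Group Q] [Finite Q]
    (hQp : IsPGroup p Q)
    (hQc : commutator Q ≤ Subgroup.center Q)
    (hQnt : commutator Q ≠ ⊥)
    (hCamQ : ∀ y : Q, y ∉ commutator Q → {z : Q | IsConj y z} = y • (commutator Q : Set Q)) :
    ∀ c : Q, c ∈ commutator Q → c ^ p = 1 := by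
  by_cases hcase : ∀ x : Q, x ∉ commutator Q → x ^ p ∈ commutator Q
  · -- every element outside Q' has p-th power in Q'
    have hQ'top : commutator Q ≠ ⊤ := by
      intro htop
      apply hQnt
      rw [commutator_def, Subgroup.commutator_eq_bot_iff_le_centralizer, Subgroup.coe_top,
        Subgroup.centralizer_univ]
      exact htop.symm.trans_le hQc
    obtain ⟨x₀, hx₀⟩ : ∃ x : Q, x ∉ commutator Q := by
      by_contra h
      push_neg at h
      exact hQ'top (top_le_iff.mp fun y _ => h y)
    intro c hc
    have hmem : x₀ * c ∈ {y | IsConj x₀ y} := by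
      rw [hCamQ x₀ hx₀]; exact ⟨c, hc, rfl⟩
    obtain ⟨g, hg⟩ := isConj_iff.mp hmem
    have hcomm : Commute x₀ c := (Subgroup.mem_center_iff.mp (hQc hc) x₀ : x₀ * c = c * x₀)
    have hcent : x₀ ^ p ∈ Subgroup.center Q := hQc (hcase x₀ hx₀)
    have hp1 : x₀ ^ p = x₀ ^ p * c ^ p := by
      calc x₀ ^ p = g * x₀ ^ p * g⁻¹ := by
            rw [Subgroup.mem_center_iff.mp hcent g, mul_inv_cancel_right]
        _ = (g * x₀ * g⁻¹) ^ p := conj_pow.symm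
        _ = (x₀ * c) ^ p := by rw [hg]
        _ = x₀ ^ p * c ^ p := hcomm.mul_pow p
    exact (left_eq_mul.mp hp1)
  · -- some x ∉ Q' has x^p ∉ Q' : contradiction with finiteness
    push_neg at hcase
    obtain ⟨x, hx, hxp⟩ := hcase
    exfalso
    have hsurj : ∀ d : Q, d ∈ commutator Q → ∃ c ∈ commutator Q, c ^ p = d := by
      intro d hd
      have hmem : x ^ p * d ∈ {y | IsConj (x ^ p) y} := by
        rw [hCamQ (x ^ p) hxp]; exact ⟨d, hd, rfl⟩
      obtain ⟨g, hg⟩ := isConj_iff.mp hmem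
      have h2' : g * x * g⁻¹ ∈ x • (commutator Q : Set Q) := by
        rw [← hCamQ x hx]; exact isConj_iff.mpr ⟨g, rfl⟩
      obtain ⟨c, hc, hxc⟩ := h2'
      simp only [smul_eq_mul] at hxc
      refine ⟨c, hc, ?_⟩
      have hcomm : Commute x c := (Subgroup.mem_center_iff.mp (hQc hc) x : x * c = c * x)
      have h3 : x ^ p * c ^ p = x ^ p * d := by
        rw [← hcomm.mul_pow, hxc, conj_pow, hg]
      exact mul_left_cancel h3
    -- an element of order p in commutator Q
    have hQ'p : IsPGroup p (commutator Q) := hQp.to_subgroup _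
    have hnt : Nontrivial (commutator Q) :=
      (Subgroup.nontrivial_iff_ne_bot (commutator Q)).mpr hQnt
    obtain ⟨d, hd1⟩ := exists_ne (1 : commutator Q)
    obtain ⟨k, hk⟩ := (IsPGroup.iff_orderOf.mp hQ'p) d
    have hkpos : k ≠ 0 := by
      intro h; rw [h, pow_zero] at hk; exact hd1 (orderOf_eq_one_iff.mp hk)
    set e : commutator Q := d ^ (p ^ (k - 1)) with he
    have hep : e ^ p = 1 := by
      rw [he, ← pow_mul, ← pow_succ, Nat.sub_add_cancel (Nat.one_le_iff_ne_zero.mpr hkpos),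
        ← hk, pow_orderOf_eq_one]
    have hene : e ≠ 1 := by
      apply pow_ne_one_of_lt_orderOf
      · exact (pow_ne_zero _ (Fact.out : p.Prime).pos.ne')
      · rw [hk]
        exact Nat.pow_lt_pow_right (Fact.out : p.Prime).one_lt
          (Nat.sub_lt (Nat.pos_of_ne_zero hkpos) one_pos)
    -- p-th power map on commutator Q is surjective, hence injective
    let f : commutator Q → commutator Q := fun y => ⟨(y : Q) ^ p, pow_mem y.2 p⟩
    have hfsurj : Function.Surjective f := by
      rintro ⟨d', hd'⟩
      obtain ⟨c, hc, hcp⟩ := hsurj d' hd'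
      exact ⟨⟨c, hc⟩, Subtype.ext hcp⟩
    have hfinj : Function.Injective f := Finite.injective_iff_surjective.mpr hfsurj
    apply hene
    apply hfinj
    apply Subtype.ext
    show (e : Q) ^ p = (1 : Q) ^ p
    rw [one_pow, ← Subgroup.coe_one, ← hep]
    norm_cast

/-- If `P` is a Camina `p`-group of nilpotence class 3, then `[P',P]` is
elementary abelian. -/
theorem stmt_6 {p : ℕ} [Fact p.Prime] {P : Type*} [Group P] [Finite P]
    (hP : IsPGroup p P) (hCam : IsCamina P)
    (hclass3 : (⊤ : Subgroup P).lowerCentralSeries 3 = ⊥ ∧ (⊤ : Subgroup P).lowerCentralSeries 2 ≠ ⊥) :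
    ∀ x ∈ ⁅commutator P, (⊤ : Subgroup P)⁆, x ^ p = 1 := by
  obtain ⟨h3, h2⟩ := hclass3
  have hK2 : (⊤ : Subgroup P).lowerCentralSeries 2 = ⁅commutator P, (⊤ : Subgroup P)⁆ := rfl
  have hK3 : ⁅(⁅commutator P, (⊤ : Subgroup P)⁆), (⊤ : Subgroup P)⁆ = ⊥ := h3
  have hKcent : ⁅commutator P, (⊤ : Subgroup P)⁆ ≤ Subgroup.center P := by
    have h := Subgroup.commutator_eq_bot_iff_le_centralizer.mp hK3
    rwa [Subgroup.coe_top, Subgroup.centralizer_univ] at h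
  -- the quotient by K = γ₃
  have hπsurj : Function.Surjective (QuotientGroup.mk' ⁅commutator P, (⊤ : Subgroup P)⁆) :=
    QuotientGroup.mk'_surjective _
  have hkerπ : (QuotientGroup.mk' ⁅commutator P, (⊤ : Subgroup P)⁆).ker
      = ⁅commutator P, (⊤ : Subgroup P)⁆ := QuotientGroup.ker_mk' _
  have hQ' : commutator (P ⧸ ⁅commutator P, (⊤ : Subgroup P)⁆)
      = (commutator P).map (QuotientGroup.mk' ⁅commutator P, (⊤ : Subgroup P)⁆) := by
    have h := Subgroup.map_commutator (H₁ := (⊤ : Subgroup P)) (H₂ := (⊤ : Subgroup P))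
      (QuotientGroup.mk' ⁅commutator P, (⊤ : Subgroup P)⁆)
    rw [Subgroup.map_top_of_surjective _ hπsurj] at h
    exact h.symm
  -- Q has class ≤ 2 : commutator Q is central
  have hQc : commutator (P ⧸ ⁅commutator P, (⊤ : Subgroup P)⁆)
      ≤ Subgroup.center (P ⧸ ⁅commutator P, (⊤ : Subgroup P)⁆) := by
    have hbot : ⁅commutator (P ⧸ ⁅commutator P, (⊤ : Subgroup P)⁆),
        (⊤ : Subgroup (P ⧸ ⁅commutator P, (⊤ : Subgroup P)⁆))⁆ = ⊥ := by
      rw [hQ', ← Subgroup.map_top_of_surjective _ hπsurj, ← Subgroup.map_commutator,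
        Subgroup.map_eq_bot_iff, hkerπ]
    have h := Subgroup.commutator_eq_bot_iff_le_centralizer.mp hbot
    rwa [Subgroup.coe_top, Subgroup.centralizer_univ] at h
  -- the Camina condition descends to the quotient
  have hCamQ : ∀ y : P ⧸ ⁅commutator P, (⊤ : Subgroup P)⁆,
      y ∉ commutator (P ⧸ ⁅commutator P, (⊤ : Subgroup P)⁆) →
      {z | IsConj y z} = y • (commutator (P ⧸ ⁅commutator P, (⊤ : Subgroup P)⁆) :
        Set (P ⧸ ⁅commutator P, (⊤ : Subgroup P)⁆)) := by
    set π := QuotientGroup.mk' ⁅commutator P, (⊤ : Subgroup P)⁆ with hπ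
    intro y hy
    obtain ⟨x, rfl⟩ := hπsurj y
    have hx : x ∉ commutator P := fun h => hy (hQ' ▸ Subgroup.mem_map_of_mem π h)
    have hclass := hCam.2 x hx
    ext z
    constructor
    · intro hz
      obtain ⟨c, hc⟩ := isConj_iff.mp hz
      obtain ⟨g, rfl⟩ := hπsurj c
      have hmem : g * x * g⁻¹ ∈ x • (commutator P : Set P) := by
        rw [← hclass]; exact isConj_iff.mpr ⟨g, rfl⟩
      obtain ⟨k, hk, hxk⟩ := hmem
      simp only [smul_eq_mul] at hxk
      refine ⟨π k, hQ' ▸ Subgroup.mem_map_of_mem π hk, ?_⟩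
      show π x * π k = z
      rw [← map_mul, hxk, ← hc]
      simp [map_mul]
    · rintro ⟨c', hc', rfl⟩
      rw [SetLike.mem_coe, hQ', Subgroup.mem_map] at hc'
      obtain ⟨k, hk, rfl⟩ := hc'
      have hmem : x * k ∈ {y | IsConj x y} := by
        rw [hclass]; exact ⟨k, hk, rfl⟩
      obtain ⟨g, hg⟩ := isConj_iff.mp hmem
      refine isConj_iff.mpr ⟨π g, ?_⟩
      show π g * π x * (π g)⁻¹ = π x * π k
      rw [← map_mul, ← map_inv, ← map_mul, ← map_mul, hg]
  -- commutator of the quotient is nontrivial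
  have hQ'nt : commutator (P ⧸ ⁅commutator P, (⊤ : Subgroup P)⁆) ≠ ⊥ := by
    intro h
    have hle : commutator P ≤ ⁅commutator P, (⊤ : Subgroup P)⁆ := by
      rw [hQ', Subgroup.map_eq_bot_iff, hkerπ] at h; exact h
    have hb : ⁅commutator P, (⊤ : Subgroup P)⁆ ≤ ⊥ :=
      le_trans (Subgroup.commutator_mono hle le_rfl) (le_of_eq hK3)
    exact h2 (by rw [hK2]; exact le_bot_iff.mp hb)
  -- key step : the commutator of the quotient has exponent p
  have hexp := camina_class2_exponent
    (hP.to_quotient ⁅commutator P, (⊤ : Subgroup P)⁆) hQc hQ'nt hCamQ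
  -- hence for a ∈ P', a^p ∈ K
  have hB : ∀ a ∈ commutator P, a ^ p ∈ ⁅commutator P, (⊤ : Subgroup P)⁆ := by
    intro a ha
    have h1 : (QuotientGroup.mk' ⁅commutator P, (⊤ : Subgroup P)⁆) (a ^ p) = 1 := by
      rw [map_pow]
      exact hexp _ (hQ' ▸ Subgroup.mem_map_of_mem _ ha)
    rw [← hkerπ]
    exact h1
  -- conclude
  have hle : ⁅commutator P, (⊤ : Subgroup P)⁆ ≤ centerPow P p := by
    rw [Subgroup.commutator_le]
    intro a ha g _
    refine ⟨hKcent (Subgroup.commutator_mem_commutator ha (Subgroup.mem_top g)), ?_⟩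
    rw [← comm_pow_left hKcent ha g p, commutatorElement_eq_one_iff_commute]
    exact ((Subgroup.mem_center_iff.mp (hKcent (hB a ha)) g).symm : Commute (a ^ p) g)
  intro x hx
  exact (hle hx).2
end

section
/- Let P be a Camina p-group of nilpotence class 3 with p odd, and let C = C_P(P') and Z = Z(P). Then C/Z is an elementary abelian p-group. -/
open scoped Pointwise
open scoped commutatorElement

section Helpers

variable {G : Type*} [Group G]

/-- Hall–Witt style auxiliary: if `x⁻¹ a x = b a` with `b` commuting with everything,
then `x * a ^ n = b ^ n * (a ^ n * x)`. -/
private lemma aux_pow_left {x a b : G} (hb : ∀ y : G, b * y = y * b)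
    (hxa : x * a = b * (a * x)) (n : ℕ) :
    x * a ^ n = b ^ n * (a ^ n * x) := by
  induction n with
  | zero => simp
  | succ n ih =>
    calc x * a ^ (n + 1) = (x * a ^ n) * a := by rw [pow_succ, ← mul_assoc]
    _ = b ^ n * (a ^ n * x) * a := by rw [ih]
    _ = b ^ n * (a ^ n * (x * a)) := by simp only [mul_assoc]
    _ = b ^ n * (a ^ n * (b * (a * x))) := by rw [hxa]
    _ = b ^ n * ((a ^ n * b) * (a * x)) := by simp only [mul_assoc]
    _ = b ^ n * ((b * a ^ n) * (a * x)) := by rw [← hb (a ^ n)]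
    _ = (b ^ n * b) * ((a ^ n * a) * x) := by simp only [mul_assoc]
    _ = b ^ (n + 1) * (a ^ (n + 1) * x) := by rw [← pow_succ, ← pow_succ]

private lemma aux_pow_conj {x a b : G} (hb : ∀ y : G, b * y = y * b)
    (hxa : x * a = b * (a * x)) (n : ℕ) :
    x ^ n * a = b ^ n * (a * x ^ n) := by
  induction n with
  | zero => simp
  | succ n ih =>
    calc x ^ (n + 1) * a = x * (x ^ n * a) := by rw [pow_succ', mul_assoc]
    _ = x * (b ^ n * (a * x ^ n)) := by rw [ih]
    _ = (x * b ^ n) * (a * x ^ n) := by simp only [mul_assoc]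
    _ = (b ^ n * x) * (a * x ^ n) := by
        rw [show x * b ^ n = b ^ n * x from
          ((Commute.pow_left (show Commute b x from hb x) n).eq).symm]
    _ = b ^ n * ((x * a) * x ^ n) := by simp only [mul_assoc]
    _ = b ^ n * ((b * (a * x)) * x ^ n) := by rw [hxa]
    _ = (b ^ n * b) * (a * (x * x ^ n)) := by simp only [mul_assoc]
    _ = b ^ (n + 1) * (a * x ^ (n + 1)) := by rw [← pow_succ, ← pow_succ']

private lemma key1 {x g a b : G} (hb : ∀ y : G, b * y = y * b)
    (hxg : x * g = a * (g * x)) (hxa : x * a = b * (a * x)) (n : ℕ) :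
    x ^ n * g = b ^ n.choose 2 * (a ^ n * (g * x ^ n)) := by
  have hbk : ∀ (y : G) (k : ℕ), y * b ^ k = b ^ k * y := fun y k =>
    ((Commute.pow_left (show Commute b y from hb y) k).eq).symm
  induction n with
  | zero => simp
  | succ n ih =>
    calc x ^ (n + 1) * g = x * (x ^ n * g) := by rw [pow_succ', mul_assoc]
    _ = x * (b ^ n.choose 2 * (a ^ n * (g * x ^ n))) := by rw [ih]
    _ = (x * b ^ n.choose 2) * (a ^ n * (g * x ^ n)) := by simp only [mul_assoc]
    _ = (b ^ n.choose 2 * x) * (a ^ n * (g * x ^ n)) := by rw [hbk x]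
    _ = b ^ n.choose 2 * ((x * a ^ n) * (g * x ^ n)) := by simp only [mul_assoc]
    _ = b ^ n.choose 2 * ((b ^ n * (a ^ n * x)) * (g * x ^ n)) := by
        rw [aux_pow_left hb hxa]
    _ = (b ^ n.choose 2 * b ^ n) * (a ^ n * ((x * g) * x ^ n)) := by simp only [mul_assoc]
    _ = (b ^ n.choose 2 * b ^ n) * (a ^ n * ((a * (g * x)) * x ^ n)) := by rw [hxg]
    _ = b ^ (n.choose 2 + n) * ((a ^ n * a) * (g * (x * x ^ n))) := by
        rw [← pow_add]; simp only [mul_assoc]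
    _ = b ^ (n + 1).choose 2 * (a ^ (n + 1) * (g * x ^ (n + 1))) := by
        rw [← pow_succ, ← pow_succ',
          show n.choose 2 + n = (n + 1).choose 2 by
            rw [Nat.choose_succ_succ', Nat.choose_one_right, Nat.add_comm]]

/-- `⁅x ^ n, g⁆ = b ^ (n choose 2) * a ^ n` where `a = ⁅x, g⁆` and `b = ⁅x, a⁆` central. -/
private lemma key1' {x g a b : G} (hb : ∀ y : G, b * y = y * b)
    (ha : ⁅x, g⁆ = a) (hxa : x * a = b * (a * x)) (n : ℕ) :
    ⁅x ^ n, g⁆ = b ^ n.choose 2 * a ^ n := by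
  have hxg : x * g = a * (g * x) := by
    rw [← ha, commutatorElement_def]; group
  have h := key1 hb hxg hxa n
  rw [commutatorElement_def]
  calc x ^ n * g * (x ^ n)⁻¹ * g⁻¹
      = (x ^ n * g) * ((x ^ n)⁻¹ * g⁻¹) := by simp only [mul_assoc]
    _ = (b ^ n.choose 2 * (a ^ n * (g * x ^ n))) * ((x ^ n)⁻¹ * g⁻¹) := by rw [h]
    _ = b ^ n.choose 2 * a ^ n := by group

/-- `⁅x, g ^ n⁆ = v ^ (n choose 2) * a ^ n` where `a = ⁅x, g⁆` and `v = ⁅g, a⁆` central. -/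
private lemma key2 {x g a v : G} (hv : ∀ y : G, v * y = y * v)
    (ha : ⁅x, g⁆ = a) (hga : g * a = v * (a * g)) (n : ℕ) :
    ⁅x, g ^ n⁆ = v ^ n.choose 2 * a ^ n := by
  have hxg : SemiconjBy x g (a * g) := by
    rw [SemiconjBy, ← ha, commutatorElement_def]; group
  have hag : ∀ k : ℕ, (a * g) ^ k = v ^ k.choose 2 * (a ^ k * g ^ k) := by
    intro k
    induction k with
    | zero => simp
    | succ k ih =>
      calc (a * g) ^ (k + 1) = (a * g) ^ k * (a * g) := by rw [pow_succ]
      _ = v ^ k.choose 2 * (a ^ k * g ^ k) * (a * g) := by rw [ih]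
      _ = v ^ k.choose 2 * (a ^ k * ((g ^ k * a) * g)) := by simp only [mul_assoc]
      _ = v ^ k.choose 2 * (a ^ k * ((v ^ k * (a * g ^ k)) * g)) := by
          rw [aux_pow_conj hv hga]
      _ = v ^ k.choose 2 * ((a ^ k * v ^ k) * (a * (g ^ k * g))) := by simp only [mul_assoc]
      _ = v ^ k.choose 2 * ((v ^ k * a ^ k) * (a * (g ^ k * g))) := by
          rw [show a ^ k * v ^ k = v ^ k * a ^ k from
            ((Commute.pow_pow (show Commute v a from hv a) k k).eq).symm]
      _ = (v ^ k.choose 2 * v ^ k) * ((a ^ k * a) * (g ^ k * g)) := by simp only [mul_assoc]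
      _ = v ^ (k + 1).choose 2 * (a ^ (k + 1) * g ^ (k + 1)) := by
          rw [← pow_add, ← pow_succ, ← pow_succ,
            show k.choose 2 + k = (k + 1).choose 2 by
              rw [Nat.choose_succ_succ', Nat.choose_one_right, Nat.add_comm]]
  have hpow : x * g ^ n = (a * g) ^ n * x := (hxg.pow_right n)
  rw [commutatorElement_def]
  calc x * g ^ n * x⁻¹ * (g ^ n)⁻¹
      = (x * g ^ n) * (x⁻¹ * (g ^ n)⁻¹) := by simp only [mul_assoc]
    _ = ((a * g) ^ n * x) * (x⁻¹ * (g ^ n)⁻¹) := by rw [hpow]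
    _ = (v ^ n.choose 2 * (a ^ n * g ^ n)) * x * (x⁻¹ * (g ^ n)⁻¹) := by rw [hag n]
    _ = v ^ n.choose 2 * a ^ n := by group

end Helpers

/-- If `P` is a Camina `p`-group of nilpotence class 3 with `p` odd,
`C = C_P(P')` and `Z = Z(P)`, then `C/Z` is elementary abelian:
`p`-th powers of elements of `C` lie in `Z` and `C` is abelian modulo `Z`. -/
theorem stmt_7 {p : ℕ} [Fact p.Prime] (hodd : Odd p) {P : Type*} [Group P] [Finite P]
    (hP : IsPGroup p P) (hCam : IsCamina P)
    (hclass3 : (⊤ : Subgroup P).lowerCentralSeries 3 = ⊥ ∧ (⊤ : Subgroup P).lowerCentralSeries 2 ≠ ⊥)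
    (C : Subgroup P) (hC : C = Subgroup.centralizer (commutator P : Set P)) :
    (∀ c ∈ C, c ^ p ∈ Subgroup.center P) ∧
      (∀ c ∈ C, ∀ d ∈ C, ⁅c, d⁆ ∈ Subgroup.center P) := by

  classical
  obtain ⟨m, hm⟩ := hodd
  -- basic structural rewritings of the lower central series
  have hLCS2 : (⊤ : Subgroup P).lowerCentralSeries 2 = ⁅commutator P, (⊤ : Subgroup P)⁆ := rfl
  have hLCS3 : (⊤ : Subgroup P).lowerCentralSeries 3 = ⁅(⊤ : Subgroup P).lowerCentralSeries 2, (⊤ : Subgroup P)⁆ := rfl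
  -- elements of γ₃ = (⊤ : Subgroup P).lowerCentralSeries 2 are central
  have hKcent : ∀ k ∈ (⊤ : Subgroup P).lowerCentralSeries 2, ∀ y : P, k * y = y * k := by
    intro k hk y
    have h1 : ⁅k, y⁆ ∈ (⊤ : Subgroup P).lowerCentralSeries 3 := by
      rw [hLCS3]
      exact Subgroup.commutator_mem_commutator hk (Subgroup.mem_top y)
    rw [hclass3.1, Subgroup.mem_bot] at h1
    exact commutatorElement_eq_one_iff_mul_comm.mp h1
  have hmemG' : ∀ x y : P, ⁅x, y⁆ ∈ commutator P := fun x y =>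
    Subgroup.commutator_mem_commutator (Subgroup.mem_top x) (Subgroup.mem_top y)
  have hmemK : ∀ a ∈ commutator P, ∀ y : P, ⁅a, y⁆ ∈ (⊤ : Subgroup P).lowerCentralSeries 2 := by
    intro a ha y
    rw [hLCS2]
    exact Subgroup.commutator_mem_commutator ha (Subgroup.mem_top y)
  have hmemK' : ∀ a ∈ commutator P, ∀ y : P, ⁅y, a⁆ ∈ (⊤ : Subgroup P).lowerCentralSeries 2 := by
    intro a ha y
    have := ((⊤ : Subgroup P).lowerCentralSeries 2).inv_mem (hmemK a ha y)
    rwa [commutatorElement_inv] at this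
  have hKG' : (⊤ : Subgroup P).lowerCentralSeries 2 ≤ commutator P :=
    Subgroup.lowerCentralSeries_antitone ⊤ (by norm_num : (1 : ℕ) ≤ 2)
  -- the derived subgroup is abelian (three subgroups lemma)
  have hbot2 : ⁅⁅commutator P, (⊤ : Subgroup P)⁆, (⊤ : Subgroup P)⁆ = ⊥ := by
    rw [← hLCS2, ← hLCS3]; exact hclass3.1
  have hbot1 : ⁅⁅(⊤ : Subgroup P), commutator P⁆, (⊤ : Subgroup P)⁆ = ⊥ := by
    rw [Subgroup.commutator_comm (⊤ : Subgroup P) (commutator P)]; exact hbot2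
  have habelS : ⁅commutator P, commutator P⁆ = ⊥ := by
    have := Subgroup.commutator_commutator_eq_bot_of_rotate hbot1 hbot2
    rwa [← commutator_def] at this
  have habel : ∀ a ∈ commutator P, ∀ b ∈ commutator P, a * b = b * a := by
    intro a ha b hb
    have : ⁅a, b⁆ ∈ (⊥ : Subgroup P) := habelS ▸ Subgroup.commutator_mem_commutator ha hb
    rw [Subgroup.mem_bot] at this
    exact commutatorElement_eq_one_iff_mul_comm.mp this
  -- Camina surjectivity of commutator maps
  have hsurj : ∀ x : P, x ∉ commutator P → ∀ z ∈ commutator P, ∃ g : P, ⁅x, g⁆ = z := by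
    intro x hx z hz
    have hx' : x⁻¹ ∉ commutator P := fun h => hx (by simpa using (commutator P).inv_mem h)
    have h := hCam.2 x⁻¹ hx'
    have hmem : x⁻¹ * z ∈ x⁻¹ • (commutator P : Set P) := by
      rw [Set.mem_smul_set]
      exact ⟨z, hz, rfl⟩
    rw [← h] at hmem
    obtain ⟨g, hg⟩ := isConj_iff.mp hmem
    refine ⟨g, ?_⟩
    rw [commutatorElement_def]
    calc x * g * x⁻¹ * g⁻¹ = x * (g * x⁻¹ * g⁻¹) := by simp only [mul_assoc]
    _ = x * (x⁻¹ * z) := by rw [hg]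
    _ = z := by group
  -- arithmetic: p.choose 2 = m * p
  have hch : p.choose 2 = m * p := by
    subst hm
    rw [Nat.choose_two_right]
    rw [show 2 * m + 1 - 1 = 2 * m from rfl]
    rw [show (2 * m + 1) * (2 * m) = m * (2 * m + 1) * 2 by ring]
    exact Nat.mul_div_cancel _ (by norm_num)
  -- Step 1 : p-th powers lie in the derived subgroup
  have hstep1 : ∀ x : P, x ^ p ∈ commutator P := by
    intro x
    by_contra hx
    -- an element of order p in the derived subgroup
    obtain ⟨k0s, hk0ne⟩ := Subgroup.ne_bot_iff_exists_ne_one.mp hclass3.2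
    obtain ⟨k0, hk0K⟩ := k0s
    have hk0ne' : k0 ≠ 1 := by
      intro h
      exact hk0ne (Subtype.ext h)
    have hQ : ∃ n, k0 ^ p ^ n = 1 := hP k0
    have hfind := Nat.find_spec hQ
    have hn0pos : Nat.find hQ ≠ 0 := by
      intro h
      rw [h, pow_zero, pow_one] at hfind
      exact hk0ne' hfind
    set w : P := k0 ^ p ^ (Nat.find hQ - 1) with hw
    have hwp : w ^ p = 1 := by
      rw [hw, ← pow_mul, ← pow_succ, Nat.sub_add_cancel (Nat.one_le_iff_ne_zero.mpr hn0pos)]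
      exact hfind
    have hwne : w ≠ 1 := by
      intro h
      exact Nat.find_min hQ (Nat.pred_lt hn0pos) h
    have hwG' : w ∈ commutator P := pow_mem (hKG' hk0K) _
    -- the p-th power map on the derived subgroup is not surjective
    set f : ↥(commutator P) → ↥(commutator P) :=
      fun u => ⟨(u : P) ^ p, pow_mem u.2 p⟩ with hf
    have hfni : ¬ Function.Injective f := by
      intro hinj
      have h1 : f ⟨w, hwG'⟩ = f 1 := by
        apply Subtype.ext
        simp [hf, hwp]
      exact hwne (congrArg Subtype.val (hinj h1))
    have hfns : ¬ Function.Surjective f := fun hs =>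
      hfni (Finite.injective_iff_surjective.mpr hs)
    simp only [Function.Surjective, not_forall] at hfns
    obtain ⟨z₀, hz₀⟩ := hfns
    -- but the Camina property shows every element of the derived subgroup is a p-th power
    obtain ⟨g, hg⟩ := hsurj (x ^ p) hx z₀ z₀.2
    have haG' : ⁅x, g⁆ ∈ commutator P := hmemG' x g
    have hbK : ⁅x, ⁅x, g⁆⁆ ∈ (⊤ : Subgroup P).lowerCentralSeries 2 := hmemK' _ haG' x
    have hbcent : ∀ y : P, ⁅x, ⁅x, g⁆⁆ * y = y * ⁅x, ⁅x, g⁆⁆ := fun y => hKcent _ hbK y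
    have hxa : x * ⁅x, g⁆ = ⁅x, ⁅x, g⁆⁆ * (⁅x, g⁆ * x) := by
      rw [commutatorElement_def x ⁅x, g⁆]; group
    have hkey := key1' hbcent rfl hxa p
    rw [hch] at hkey
    have hbG' : ⁅x, ⁅x, g⁆⁆ ∈ commutator P := hKG' hbK
    have hcomm : Commute (⁅x, ⁅x, g⁆⁆ ^ m) ⁅x, g⁆ :=
      Commute.pow_left (hbcent ⁅x, g⁆) m
    rw [pow_mul, ← hcomm.mul_pow] at hkey
    refine hz₀ ⟨⟨⁅x, ⁅x, g⁆⁆ ^ m * ⁅x, g⁆, mul_mem (pow_mem hbG' m) haG'⟩,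
      Subtype.ext (show (⁅x, ⁅x, g⁆⁆ ^ m * ⁅x, g⁆) ^ p = (z₀ : P) from hkey ▸ hg)⟩
  -- Step 2 : γ₃ has exponent p
  have hKexp : ∀ k ∈ (⊤ : Subgroup P).lowerCentralSeries 2, k ^ p = 1 := by
    have hle : (⊤ : Subgroup P).lowerCentralSeries 2 ≤
        { carrier := {t : P | (∀ y : P, t * y = y * t) ∧ t ^ p = 1}
          one_mem' := ⟨fun y => by simp, one_pow p⟩
          mul_mem' := by
            rintro s t ⟨hs, hsp⟩ ⟨ht, htp⟩
            refine ⟨fun y => by rw [mul_assoc, ht y, ← mul_assoc, hs y, mul_assoc], ?_⟩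
            rw [(show Commute s t from hs t).mul_pow, hsp, htp, one_mul]
          inv_mem' := by
            rintro s ⟨hs, hsp⟩
            exact ⟨fun y => ((show Commute s y from hs y).inv_left).eq,
              by rw [inv_pow, hsp, inv_one]⟩ } := by
      rw [hLCS2, Subgroup.commutator_le]
      intro a ha y _
      have hkK : ⁅a, y⁆ ∈ (⊤ : Subgroup P).lowerCentralSeries 2 := hmemK a ha y
      have hkcent : ∀ u : P, ⁅a, y⁆ * u = u * ⁅a, y⁆ := fun u => hKcent _ hkK u
      refine ⟨hkcent, ?_⟩
      have hga : y * ⁅a, y⁆ = (1 : P) * (⁅a, y⁆ * y) := by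
        rw [one_mul, hkcent y]
      have h2 := key2 (fun y => by simp) rfl hga p
      have h3 : ⁅a, y ^ p⁆ = 1 :=
        commutatorElement_eq_one_iff_mul_comm.mpr (habel a ha (y ^ p) (hstep1 y))
      rw [h3, one_pow, one_mul] at h2
      exact h2.symm
    intro k hk
    exact (hle hk).2
  -- the centralizer hypothesis, elementwise
  have hcent : ∀ c ∈ C, ∀ u ∈ commutator P, u * c = c * u := by
    intro c hc u hu
    rw [hC] at hc
    exact Subgroup.mem_centralizer_iff.mp hc u hu
  constructor
  · -- p-th powers of elements of C are central
    intro c hc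
    rw [Subgroup.mem_center_iff]
    intro g
    have haG' : ⁅c, g⁆ ∈ commutator P := hmemG' c g
    have hca : c * ⁅c, g⁆ = ⁅c, g⁆ * c := (hcent c hc _ haG').symm
    -- b = ⁅c, ⁅c,g⁆⁆ = 1
    have hb1 : ⁅c, ⁅c, g⁆⁆ = 1 := commutatorElement_eq_one_iff_mul_comm.mpr hca
    have hxa : c * ⁅c, g⁆ = ⁅c, ⁅c, g⁆⁆ * (⁅c, g⁆ * c) := by
      rw [commutatorElement_def c ⁅c, g⁆]; group
    have hkey := key1' (fun y => by rw [hb1]; simp) rfl hxa p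
    rw [hb1, one_pow, one_mul] at hkey
    -- now show ⁅c, g⁆ ^ p = 1 using key2
    have hvK : ⁅g, ⁅c, g⁆⁆ ∈ (⊤ : Subgroup P).lowerCentralSeries 2 := hmemK' _ haG' g
    have hvcent : ∀ u : P, ⁅g, ⁅c, g⁆⁆ * u = u * ⁅g, ⁅c, g⁆⁆ := fun u => hKcent _ hvK u
    have hga : g * ⁅c, g⁆ = ⁅g, ⁅c, g⁆⁆ * (⁅c, g⁆ * g) := by
      rw [commutatorElement_def g ⁅c, g⁆]; group
    have h2 := key2 hvcent rfl hga p
    have h3 : ⁅c, g ^ p⁆ = 1 :=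
      commutatorElement_eq_one_iff_mul_comm.mpr (hcent c hc _ (hstep1 g)).symm
    have hvp : ⁅g, ⁅c, g⁆⁆ ^ p = 1 := hKexp _ hvK
    rw [h3, hch, mul_comm m p, pow_mul, hvp, one_pow, one_mul] at h2
    -- h2 : 1 = ⁅c, g⁆ ^ p
    rw [← h2] at hkey
    -- hkey : ⁅c ^ p, g⁆ = 1
    exact (commutatorElement_eq_one_iff_mul_comm.mp hkey).symm
  · -- commutators of elements of C are central (three subgroups lemma)
    have hCbot : ⁅commutator P, C⁆ = ⊥ := by
      rw [Subgroup.commutator_comm, Subgroup.commutator_eq_bot_iff_le_centralizer, hC]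
    have h1 : ⁅⁅C, (⊤ : Subgroup P)⁆, C⁆ = ⊥ := by
      rw [eq_bot_iff, ← hCbot]
      exact Subgroup.commutator_mono
        ((Subgroup.commutator_mono le_top le_rfl).trans (le_of_eq (commutator_def P).symm))
        le_rfl
    have h2 : ⁅⁅(⊤ : Subgroup P), C⁆, C⁆ = ⊥ := by
      rw [Subgroup.commutator_comm (⊤ : Subgroup P) C]
      exact h1
    have h3 := Subgroup.commutator_commutator_eq_bot_of_rotate h1 h2
    intro c hc d hd
    rw [Subgroup.mem_center_iff]
    intro g
    have : ⁅⁅c, d⁆, g⁆ ∈ (⊥ : Subgroup P) := by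
      rw [← h3]
      exact Subgroup.commutator_mem_commutator
        (Subgroup.commutator_mem_commutator hc hd) (Subgroup.mem_top g)
    rw [Subgroup.mem_bot] at this
    exact (commutatorElement_eq_one_iff_mul_comm.mp this).symm
end

section
/- Let P be a finite p-group with cyclic center Z, and let χ be a faithful irreducible complex character of P. If P is a Camina group of class 3, then χ vanishes on P \ Z, and consequently χ(1)² = |P : Z|. -/
open scoped Pointwise

open CategoryTheory Module

open scoped commutatorElement

section Aux

variable {P : Type} [Group P] (V : FDRep ℂ P)

lemma myAux.exists_ne_zero [Simple V] : ∃ v : V, v ≠ 0 := by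
  by_contra h
  push_neg at h
  apply CategoryTheory.id_nonzero V
  ext v
  simp [h v]

lemma myAux.scalar_of_central [Simple V] {z : P} (hz : z ∈ Subgroup.center P) :
    ∃ c : ℂ, ∀ v : V, V.ρ z v = c • v := by
  let f : V ⟶ V :=
    { hom := FGModuleCat.ofHom (V.ρ z)
      comm := fun g => by
        ext v
        show V.ρ z (V.ρ g v) = V.ρ g (V.ρ z v)
        rw [← Module.End.mul_apply, ← Module.End.mul_apply, ← map_mul, ← map_mul,
          (Subgroup.mem_center_iff.mp hz g)] }
  obtain ⟨c, hc⟩ := CategoryTheory.endomorphism_simple_eq_smul_id (𝕜 := ℂ) f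
  refine ⟨c, fun v => ?_⟩
  have := congrArg Action.Hom.hom hc
  have h2 := LinearMap.congr_fun (congrArg (fun f => f.hom.hom.hom) hc) v
  exact h2.symm

lemma myAux.subrep_dichotomy [Simple V] (U : Submodule ℂ V)
    (hU : ∀ g : P, ∀ v ∈ U, V.ρ g v ∈ U) : U = ⊥ ∨ U = ⊤ := by
  by_cases hb : U = ⊥
  · exact Or.inl hb
  right
  haveI : FiniteDimensional ℂ U := inferInstance
  let σ : Representation ℂ P U :=
    { toFun := fun g => (V.ρ g).restrict (fun v hv => hU g v hv)
      map_one' := by ext v; simp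
      map_mul' := fun g h => by ext v; simp }
  let W : FDRep ℂ P := FDRep.of σ
  let ι : W ⟶ V :=
    { hom := FGModuleCat.ofHom U.subtype
      comm := fun g => by ext v; rfl }
  have hinj : Function.Injective ι.hom := Subtype.coe_injective
  haveI : Mono ι := ConcreteCategory.mono_of_injective ι hinj
  have hne : ι ≠ 0 := by
    obtain ⟨u, hu, hu0⟩ := Submodule.ne_bot_iff U |>.mp hb
    intro h
    apply hu0
    have := LinearMap.congr_fun (congrArg (fun f => f.hom.hom.hom) h) ⟨u, hu⟩
    exact this
  haveI : IsIso ι := CategoryTheory.isIso_of_mono_of_nonzero hne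
  rw [Submodule.eq_top_iff']
  intro v
  have hcomp : (CategoryTheory.inv ι ≫ ι) = 𝟙 V := IsIso.inv_hom_id ι
  have := LinearMap.congr_fun (congrArg (fun f => f.hom.hom.hom) hcomp) v
  have h2 : U.subtype ((CategoryTheory.inv ι).hom v) = v := this
  rw [← h2]
  exact ((CategoryTheory.inv ι).hom v).2

end Aux

section Aux2

variable {P : Type} [Group P] (V : FDRep ℂ P)

lemma myAux.char_mul_scalar (x z : P) (c : ℂ) (h : ∀ v : V, V.ρ z v = c • v) :
    V.character (x * z) = c * V.character x := by
  show LinearMap.trace ℂ V (V.ρ (x * z)) = c * LinearMap.trace ℂ V (V.ρ x)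
  have hρ : V.ρ (x * z) = c • V.ρ x := by
    ext v
    rw [map_mul]
    show V.ρ x (V.ρ z v) = c • V.ρ x v
    rw [h v, map_smul]
  rw [hρ, map_smul, smul_eq_mul]



lemma myAux.sum_rho_eq_zero [Simple V] (hfaithful : Function.Injective V.ρ)
    (N : Subgroup P) [N.Normal] (hN : N ≠ ⊥) [Fintype N] :
    ∑ z : N, V.ρ (z : P) = 0 := by
  set σ : Representation ℂ N V := V.ρ.comp N.subtype with hσ
  have hσ_apply : ∀ (n : N) (v : V), σ n v = V.ρ (n : P) v := fun n v => rfl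
  have hinvU : ∀ g : P, ∀ v ∈ σ.invariants, V.ρ g v ∈ σ.invariants := by
    intro g v hv
    rw [Representation.mem_invariants] at hv ⊢
    intro n
    have hn' : (g⁻¹ * (n : P) * g) ∈ N := by
      simpa using ‹N.Normal›.conj_mem _ n.2 g⁻¹
    rw [hσ_apply]
    calc V.ρ (n : P) (V.ρ g v) = V.ρ ((n : P) * g) v := by
          rw [map_mul]; rfl
      _ = V.ρ (g * (g⁻¹ * (n : P) * g)) v := by group
      _ = V.ρ g (V.ρ (g⁻¹ * (n : P) * g) v) := by rw [map_mul]; rfl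
      _ = V.ρ g v := by rw [← hσ_apply ⟨_, hn'⟩ v, hv ⟨_, hn'⟩]
  rcases myAux.subrep_dichotomy V σ.invariants hinvU with h | h
  · have key : ∀ v : V, (∑ z : N, V.ρ (z : P)) v ∈ σ.invariants := by
      intro v
      rw [Representation.mem_invariants]
      intro n
      rw [hσ_apply]
      simp only [LinearMap.sum_apply]
      rw [map_sum]
      calc (∑ z : N, V.ρ (n : P) (V.ρ (z : P) v))
          = ∑ z : N, V.ρ (((n * z : N) : P)) v := by
            refine Finset.sum_congr rfl fun z _ => ?_
            rw [← Module.End.mul_apply, ← map_mul]; rfl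
        _ = ∑ z : N, V.ρ (z : P) v := Equiv.sum_comp (Equiv.mulLeft n) fun z => V.ρ (z : P) v
    ext v
    have h2 := key v
    rw [h] at h2
    simpa using h2
  · exfalso
    apply hN
    rw [eq_bot_iff]
    intro n hn
    have h1 : V.ρ n = V.ρ 1 := by
      rw [map_one]
      ext v
      have hv : v ∈ σ.invariants := h ▸ Submodule.mem_top
      rw [Representation.mem_invariants] at hv
      exact hv ⟨n, hn⟩
    simpa using hfaithful h1

end Aux2

/-- Let `P` be a finite `p`-group with cyclic center `Z` and `χ` a faithful
irreducible complex character of `P`. If `P` is a Camina group of class 3, then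
`χ` vanishes on `P \ Z` and `χ(1)² = |P : Z|`. -/
theorem stmt_9 {p : ℕ} [Fact p.Prime] {P : Type} [Group P] [Fintype P]
    (hP : IsPGroup p P) (hZ : IsCyclic (Subgroup.center P))
    (V : FDRep ℂ P) [CategoryTheory.Simple V]
    (hfaithful : Function.Injective V.ρ)
    (hCam : IsCamina P)
    (hclass3 : (⊤ : Subgroup P).lowerCentralSeries 3 = ⊥ ∧ (⊤ : Subgroup P).lowerCentralSeries 2 ≠ ⊥) :
    (∀ x : P, x ∉ Subgroup.center P → V.character x = 0) ∧
      V.character 1 ^ 2 = ((Subgroup.center P).index : ℂ) := by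
  classical
  obtain ⟨hnab, hconj⟩ := hCam
  have hNbot : commutator P ≠ ⊥ := by
    intro h
    apply hnab
    intro a b
    have h2 := Subgroup.commutator_eq_bot_iff_le_centralizer.mp h
    have h3 := h2 (Subgroup.mem_top a)
    rw [Subgroup.mem_centralizer_iff] at h3
    exact (h3 b (Subgroup.mem_top b)).symm
  obtain ⟨v₀, hv₀⟩ := myAux.exists_ne_zero V
  have part1 : ∀ x : P, x ∉ Subgroup.center P → V.character x = 0 := by
    intro x hx
    by_cases hxc : x ∈ commutator P
    · rw [Subgroup.mem_center_iff] at hx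
      push_neg at hx
      obtain ⟨t, ht⟩ := hx
      set z : P := ⁅x⁻¹, t⁆ with hzdef
      have hxz : x * z = t * x * t⁻¹ := by
        rw [hzdef]; group
      have hz2 : z ∈ (⊤ : Subgroup P).lowerCentralSeries 2 := by
        have h0 : (⊤ : Subgroup P).lowerCentralSeries 2 = ⁅(⊤ : Subgroup P).lowerCentralSeries 1, ⊤⁆ := rfl
        rw [h0]
        refine Subgroup.commutator_mem_commutator ?_ (Subgroup.mem_top t)
        rw [lowerCentralSeries_one]
        exact inv_mem hxc
      have hzcen : z ∈ Subgroup.center P := by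
        have h3 : (⁅(⊤ : Subgroup P).lowerCentralSeries 2, ⊤⁆ : Subgroup P) = ⊥ := hclass3.1
        have h4 := Subgroup.commutator_eq_bot_iff_le_centralizer.mp h3 hz2
        rwa [Subgroup.coe_top, Subgroup.centralizer_univ] at h4
      have hzne : z ≠ 1 := by
        intro h
        have h5 : t * x * t⁻¹ = x := by rw [← hxz, h, mul_one]
        exact ht (mul_inv_eq_iff_eq_mul.mp h5)
      obtain ⟨c, hc⟩ := myAux.scalar_of_central V hzcen
      have hcne : c ≠ 1 := by
        intro h
        apply hzne
        apply hfaithful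
        rw [map_one]
        ext v
        rw [hc v, h, one_smul]; rfl
      have h1 : V.character (x * z) = V.character x := by
        rw [hxz, FDRep.char_conj]
      rw [myAux.char_mul_scalar V x z c hc] at h1
      have h6 : (c - 1) * V.character x = 0 := by linear_combination h1
      rcases mul_eq_zero.mp h6 with h | h
      · exact absurd (sub_eq_zero.mp h) hcne
      · exact h
    · have hsum0 : ∑ zz : commutator P, V.ρ (zz : P) = 0 :=
        myAux.sum_rho_eq_zero V hfaithful _ hNbot
      have hconst : ∀ zz : commutator P, V.character (x * zz) = V.character x := by
        intro zz
        have hmem : x * (zz : P) ∈ x • (commutator P : Set P) := ⟨zz, zz.2, rfl⟩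
        rw [← hconj x hxc] at hmem
        obtain ⟨c, hc⟩ := isConj_iff.mp hmem
        rw [← hc, FDRep.char_conj]
      have hcardsum : (Fintype.card (commutator P) : ℂ) * V.character x
          = ∑ zz : commutator P, V.character (x * zz) := by
        rw [Finset.sum_congr rfl fun zz _ => hconst zz, Finset.sum_const]
        simp [mul_comm]
      have hzero : ∑ zz : commutator P, V.character (x * zz) = 0 := by
        have h7 : ∀ zz : commutator P, V.character (x * zz)
            = LinearMap.trace ℂ V (V.ρ x ∘ₗ V.ρ (zz : P)) := by
          intro zz
          show LinearMap.trace ℂ V (V.ρ (x * zz)) = _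
          rw [map_mul]; rfl
        rw [Finset.sum_congr rfl fun zz _ => h7 zz, ← map_sum]
        have h8 : (∑ zz : commutator P, V.ρ x ∘ₗ V.ρ (zz : P))
            = V.ρ x ∘ₗ (∑ zz : commutator P, V.ρ (zz : P)) := by
          ext v; simp
        rw [h8, hsum0]
        simp
      rw [hzero] at hcardsum
      have hcard : (Fintype.card (commutator P) : ℂ) ≠ 0 := by
        exact_mod_cast Fintype.card_ne_zero
      exact (mul_eq_zero.mp hcardsum).resolve_left hcard
  refine ⟨part1, ?_⟩
  haveI : Invertible ((Nat.card P : ℂ)) :=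
    invertibleOfNonzero (by rw [Nat.card_eq_fintype_card]; exact_mod_cast Fintype.card_ne_zero)
  have horth0 := FDRep.char_orthonormal V V
  rw [if_pos ⟨Iso.refl V⟩, Nat.card_eq_fintype_card] at horth0
  have horth : ((Fintype.card P : ℂ))⁻¹ * ∑ g : P, V.character g * V.character g⁻¹ = 1 := by
    exact_mod_cast horth0
  set n : ℂ := (finrank ℂ V : ℂ) with hn
  have hterm : ∀ g : P, V.character g * V.character g⁻¹
      = if g ∈ Subgroup.center P then n ^ 2 else 0 := by
    intro g
    by_cases hg : g ∈ Subgroup.center P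
    · rw [if_pos hg]
      obtain ⟨c, hc⟩ := myAux.scalar_of_central V hg
      obtain ⟨d, hd⟩ := myAux.scalar_of_central V (inv_mem hg)
      have hcd : c * d = 1 := by
        have h1 : V.ρ g (V.ρ g⁻¹ v₀) = v₀ := by
          rw [← Module.End.mul_apply, ← map_mul, mul_inv_cancel, map_one]; rfl
        rw [hd, map_smul, hc, smul_smul] at h1
        have h2 : ((d * c) - 1) • v₀ = 0 := by rw [sub_smul, one_smul, h1, sub_self]
        rcases smul_eq_zero.mp h2 with h | h
        · have := sub_eq_zero.mp h; linear_combination this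
        · exact absurd h hv₀
      have hcg : V.character g = c * n := by
        have h3 : V.ρ g = c • (LinearMap.id : V →ₗ[ℂ] V) := by
          ext v; rw [hc v]; rfl
        show LinearMap.trace ℂ V (V.ρ g) = c * n
        rw [h3, map_smul, smul_eq_mul, LinearMap.trace_id, hn]
      have hcg' : V.character g⁻¹ = d * n := by
        have h3 : V.ρ g⁻¹ = d • (LinearMap.id : V →ₗ[ℂ] V) := by
          ext v; rw [hd v]; rfl
        show LinearMap.trace ℂ V (V.ρ g⁻¹) = d * n
        rw [h3, map_smul, smul_eq_mul, LinearMap.trace_id, hn]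
      rw [hcg, hcg']
      linear_combination (n ^ 2) * hcd
    · rw [if_neg hg, part1 g hg, zero_mul]
  have hsum : ∑ g : P, V.character g * V.character g⁻¹
      = (Fintype.card (Subgroup.center P) : ℂ) * n ^ 2 := by
    rw [Finset.sum_congr rfl fun g _ => hterm g, ← Finset.sum_filter, Finset.sum_const,
      ← Fintype.card_subtype]
    simp [mul_comm]
  rw [hsum] at horth
  have hPZ : (Fintype.card (Subgroup.center P) : ℂ) * n ^ 2 = (Fintype.card P : ℂ) :=
    ((inv_mul_eq_one₀ (by exact_mod_cast Fintype.card_ne_zero : (Fintype.card P : ℂ) ≠ 0)).mp horth).symm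
  have hindex : (Fintype.card (Subgroup.center P) : ℂ) * ((Subgroup.center P).index : ℂ)
      = (Fintype.card P : ℂ) := by
    have := Subgroup.card_mul_index (Subgroup.center P)
    rw [Nat.card_eq_fintype_card, Nat.card_eq_fintype_card] at this
    exact_mod_cast this
  have hZ0 : (Fintype.card (Subgroup.center P) : ℂ) ≠ 0 := by
    exact_mod_cast Fintype.card_ne_zero
  have hfinal : n ^ 2 = ((Subgroup.center P).index : ℂ) :=
    mul_left_cancel₀ hZ0 (by rw [hPZ, hindex])
  rw [FDRep.char_one]
  exact hfinal
end

section
/- Let P be a Camina p-group of nilpotence class 3 with cyclic center Z = Z(P), and let C = C_P(P'). Then |P : C| = |P' : Z|. -/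
open scoped Pointwise
open scoped commutatorElement
open scoped IsMulCommutative

section commIdent

variable {G : Type*} [Group G]

lemma comm_mul_left' (x y u : G) (hy : ⁅y, u⁆ ∈ Subgroup.center G)
    (hx : ⁅x, u⁆ ∈ Subgroup.center G) :
    ⁅x * y, u⁆ = ⁅x, u⁆ * ⁅y, u⁆ := by
  have hy' := Subgroup.mem_center_iff.mp hy
  have hx' := Subgroup.mem_center_iff.mp hx
  calc ⁅x * y, u⁆ = (x * ⁅y, u⁆) * (u * x⁻¹ * u⁻¹) := by
        simp only [commutatorElement_def]; group
    _ = (⁅y, u⁆ * x) * (u * x⁻¹ * u⁻¹) := by rw [hy' x]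
    _ = ⁅y, u⁆ * ⁅x, u⁆ := by simp only [commutatorElement_def]; group
    _ = ⁅x, u⁆ * ⁅y, u⁆ := hx' ⁅y, u⁆

lemma comm_mul_right' (x u v : G) (hv : ⁅x, v⁆ ∈ Subgroup.center G) :
    ⁅x, u * v⁆ = ⁅x, u⁆ * ⁅x, v⁆ := by
  have hv' := Subgroup.mem_center_iff.mp hv
  calc ⁅x, u * v⁆ = ⁅x, u⁆ * (u * ⁅x, v⁆) * u⁻¹ := by
        simp only [commutatorElement_def]; group
    _ = ⁅x, u⁆ * (⁅x, v⁆ * u) * u⁻¹ := by rw [hv' u]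
    _ = ⁅x, u⁆ * ⁅x, v⁆ := by group

end commIdent

lemma card_monoidHom_le_comm' (B M : Type*) [CommGroup B] [Finite B] [CommGroup M] [Finite M]
    [IsCyclic M] : Nat.card (B →* M) ≤ Nat.card B := by
  haveI : NeZero ((Monoid.exponent B : ℂ)) :=
    ⟨Nat.cast_ne_zero.mpr (NeZero.ne (Monoid.exponent B))⟩
  haveI : NeZero (Nat.card M) := ⟨Nat.card_pos.ne'⟩
  haveI : NeZero ((Nat.card M : ℂ)) := ⟨Nat.cast_ne_zero.mpr (NeZero.ne (Nat.card M))⟩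
  let e : M ≃* (rootsOfUnity (Nat.card M) ℂ) :=
    mulEquivOfCyclicCardEq (by rw [HasEnoughRootsOfUnity.natCard_rootsOfUnity])
  let ι : M →* ℂˣ := (Subgroup.subtype _).comp e.toMonoidHom
  have hι : Function.Injective ι := (Subgroup.subtype_injective _).comp e.injective
  have hΨ : Function.Injective (fun f : B →* M => ι.comp f) := by
    intro f g h
    ext b
    exact hι (DFunLike.congr_fun h b)
  obtain ⟨ee⟩ := CommGroup.monoidHom_mulEquiv_of_hasEnoughRootsOfUnity B ℂ
  haveI : Finite (B →* ℂˣ) := Finite.of_equiv B ee.toEquiv.symm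
  calc Nat.card (B →* M) ≤ Nat.card (B →* ℂˣ) := Nat.card_le_card_of_injective _ hΨ
    _ = Nat.card B := Nat.card_congr ee.toEquiv

lemma card_monoidHom_le' (B M : Type*) [Group B] [Finite B] [CommGroup M] [Finite M]
    [IsCyclic M] : Nat.card (B →* M) ≤ Nat.card B := by
  rw [Nat.card_congr (Abelianization.lift (G := B) (A := M))]
  calc Nat.card (Abelianization B →* M) ≤ Nat.card (Abelianization B) :=
        card_monoidHom_le_comm' _ _
    _ ≤ Nat.card B :=
        Nat.card_le_card_of_surjective Abelianization.of (fun y => Quotient.exists_rep y)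

theorem stmt_10' {p : ℕ} [Fact p.Prime] {P : Type*} [Group P] [Finite P]
    (hclass3 : (⊤ : Subgroup P).lowerCentralSeries 3 = ⊥ ∧ (⊤ : Subgroup P).lowerCentralSeries 2 ≠ ⊥)
    (hZ : IsCyclic (Subgroup.center P))
    (C : Subgroup P) (hC : C = Subgroup.centralizer (commutator P : Set P)) :
    C.index = (Subgroup.center P).relIndex (commutator P) := by
  subst hC
  set Z := Subgroup.center P with hZdef
  set K := commutator P with hKdef
  -- γ₃ is central
  have h2le : (⊤ : Subgroup P).lowerCentralSeries 2 ≤ Z := by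
    have h3 : (⁅(⊤ : Subgroup P).lowerCentralSeries 2, (⊤ : Subgroup P)⁆ : Subgroup P) = ⊥ := hclass3.1
    have := Subgroup.commutator_eq_bot_iff_le_centralizer.mp h3
    rwa [Subgroup.coe_top, Subgroup.centralizer_univ] at this
  have hcent : ∀ u ∈ K, ∀ x : P, ⁅u, x⁆ ∈ Z := by
    intro u hu x
    exact h2le (Subgroup.commutator_mem_commutator hu (Subgroup.mem_top x))
  have hcent' : ∀ u ∈ K, ∀ x : P, ⁅x, u⁆ ∈ Z := by
    intro u hu x
    rw [← commutatorElement_inv]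
    exact Z.inv_mem (hcent u hu x)
  haveI : IsCyclic Z := hZ
  haveI hN : (Z.subgroupOf K).Normal := by
    constructor
    intro z hz k
    rw [Subgroup.mem_subgroupOf] at hz ⊢
    have h := Subgroup.mem_center_iff.mp hz (k : P)
    simp only [Subgroup.coe_mul, InvMemClass.coe_inv]
    rw [h, mul_assoc, mul_inv_cancel, mul_one]
    exact hz
  haveI hCnormal : (Subgroup.centralizer (K : Set P)).Normal := by
    constructor
    intro a ha g
    rw [Subgroup.mem_centralizer_iff] at ha ⊢
    intro k hk
    have hKn : K.Normal := by rw [hKdef]; infer_instance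
    have hk' : g⁻¹ * k * g ∈ K := by simpa using hKn.conj_mem k hk g⁻¹
    have h0 := ha _ hk'
    have := congrArg (fun t => g * t * g⁻¹) h0
    simpa [mul_assoc] using this
  -- first pairing map : P →* Hom(K/(Z∩K), Z)
  let f : P → (K →* Z) := fun x =>
    MonoidHom.mk' (fun u => ⟨⁅x, (u : P)⁆, hcent' _ u.2 x⟩)
      (by
        intro u v
        ext
        simp only [Subgroup.coe_mul]
        exact comm_mul_right' x _ _ (hcent' _ v.2 x))
  have hfkill : ∀ x : P, ∀ z ∈ Z.subgroupOf K, f x z = 1 := by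
    intro x z hz
    rw [Subgroup.mem_subgroupOf] at hz
    have h1 : ⁅x, (z : P)⁆ = 1 :=
      commutatorElement_eq_one_iff_commute.mpr (Subgroup.mem_center_iff.mp hz x)
    ext
    simp only [f, MonoidHom.mk'_apply, OneMemClass.coe_one]
    exact h1
  let fQ : P → ((K ⧸ Z.subgroupOf K) →* Z) := fun x =>
    QuotientGroup.lift (Z.subgroupOf K) (f x) (hfkill x)
  let F : P →* ((K ⧸ Z.subgroupOf K) →* Z) :=
    MonoidHom.mk' fQ
      (by
        intro x y
        ext u
        simp only [MonoidHom.comp_apply, QuotientGroup.mk'_apply, MonoidHom.mul_apply,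
          fQ, QuotientGroup.lift_mk, f, MonoidHom.mk'_apply, Subgroup.coe_mul]
        exact comm_mul_left' x y _ (hcent' _ u.2 y) (hcent' _ u.2 x))
  have hkerF : F.ker = Subgroup.centralizer (K : Set P) := by
    ext x
    rw [MonoidHom.mem_ker, Subgroup.mem_centralizer_iff]
    constructor
    · intro h k hk
      have h1 : fQ x (QuotientGroup.mk ⟨k, hk⟩) = 1 := by
        rw [show fQ x = F x from rfl, h]; rfl
      simp only [fQ, QuotientGroup.lift_mk] at h1
      have h2 : ⁅x, k⁆ = 1 := congrArg Subtype.val h1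
      exact (commutatorElement_eq_one_iff_commute.mp h2).symm.eq
    · intro h
      ext u
      simp only [MonoidHom.comp_apply, QuotientGroup.mk'_apply, MonoidHom.one_apply,
        F, MonoidHom.mk'_apply, fQ, QuotientGroup.lift_mk, f, OneMemClass.coe_one]
      exact commutatorElement_eq_one_iff_commute.mpr ((h (u : P) u.2).symm)
  -- second pairing map : K →* Hom(P/C, Z)
  let g : K → (P →* Z) := fun u =>
    MonoidHom.mk' (fun x => ⟨⁅(u : P), x⁆, hcent _ u.2 x⟩)
      (by
        intro x y
        ext
        exact comm_mul_right' _ x y (hcent _ u.2 y))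
  have hgkill : ∀ u : K, ∀ c ∈ Subgroup.centralizer (K : Set P), g u c = 1 := by
    intro u c hc
    rw [Subgroup.mem_centralizer_iff] at hc
    ext
    simp only [g, MonoidHom.mk'_apply]
    exact commutatorElement_eq_one_iff_commute.mpr (hc (u : P) u.2)
  let gQ : K → ((P ⧸ Subgroup.centralizer (K : Set P)) →* Z) := fun u =>
    QuotientGroup.lift _ (g u) (hgkill u)
  let Gm : K →* ((P ⧸ Subgroup.centralizer (K : Set P)) →* Z) :=
    MonoidHom.mk' gQ
      (by
        intro u v
        ext x
        simp only [MonoidHom.comp_apply, QuotientGroup.mk'_apply, MonoidHom.mul_apply,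
          gQ, QuotientGroup.lift_mk, g, MonoidHom.mk'_apply, Subgroup.coe_mul]
        exact comm_mul_left' _ _ x (hcent _ v.2 x) (hcent _ u.2 x))
  have hkerG : Gm.ker = Z.subgroupOf K := by
    ext u
    rw [MonoidHom.mem_ker, Subgroup.mem_subgroupOf]
    constructor
    · intro h
      rw [hZdef, Subgroup.mem_center_iff]
      intro x
      have h1 : gQ u (QuotientGroup.mk x) = 1 := by
        rw [show gQ u = Gm u from rfl, h]; rfl
      simp only [gQ, QuotientGroup.lift_mk] at h1
      have h2 : ⁅(u : P), x⁆ = 1 := congrArg Subtype.val h1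
      exact ((commutatorElement_eq_one_iff_commute.mp h2).symm).eq
    · intro h
      ext x
      simp only [MonoidHom.comp_apply, QuotientGroup.mk'_apply, MonoidHom.one_apply,
        Gm, MonoidHom.mk'_apply, gQ, QuotientGroup.lift_mk, g, OneMemClass.coe_one]
      exact commutatorElement_eq_one_iff_commute.mpr
        ((Subgroup.mem_center_iff.mp h x).symm)
  -- finiteness
  haveI : Finite ((K ⧸ Z.subgroupOf K) →* Z) :=
    Finite.of_injective (fun h : (K ⧸ Z.subgroupOf K) →* Z => (h : (K ⧸ Z.subgroupOf K) → Z))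
      DFunLike.coe_injective
  haveI : Finite ((P ⧸ Subgroup.centralizer (K : Set P)) →* Z) :=
    Finite.of_injective
      (fun h : (P ⧸ Subgroup.centralizer (K : Set P)) →* Z =>
        (h : (P ⧸ Subgroup.centralizer (K : Set P)) → Z))
      DFunLike.coe_injective
  -- conclude
  have hle1 : (Subgroup.centralizer (K : Set P)).index ≤ Z.relIndex K := by
    rw [← hkerF, Subgroup.index_eq_card, Subgroup.relIndex, Subgroup.index_eq_card]
    calc Nat.card (P ⧸ F.ker) ≤ Nat.card ((K ⧸ Z.subgroupOf K) →* Z) :=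
          Nat.card_le_card_of_injective (QuotientGroup.kerLift F)
            (QuotientGroup.kerLift_injective F)
      _ ≤ Nat.card (K ⧸ Z.subgroupOf K) := card_monoidHom_le' _ _
  have hle2 : Z.relIndex K ≤ (Subgroup.centralizer (K : Set P)).index := by
    rw [Subgroup.relIndex, ← hkerG, Subgroup.index_eq_card, Subgroup.index_eq_card]
    calc Nat.card (K ⧸ Gm.ker) ≤
          Nat.card ((P ⧸ Subgroup.centralizer (K : Set P)) →* Z) :=
          Nat.card_le_card_of_injective (QuotientGroup.kerLift Gm)
            (QuotientGroup.kerLift_injective Gm)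
      _ ≤ Nat.card (P ⧸ Subgroup.centralizer (K : Set P)) := card_monoidHom_le' _ _
  exact le_antisymm hle1 hle2

/-- If `P` is a Camina `p`-group of nilpotence class 3 with cyclic center `Z`,
and `C = C_P(P')`, then `|P : C| = |P' : Z|`. -/
theorem stmt_10 {p : ℕ} [Fact p.Prime] {P : Type*} [Group P] [Finite P]
    (hP : IsPGroup p P) (hCam : IsCamina P)
    (hclass3 : (⊤ : Subgroup P).lowerCentralSeries 3 = ⊥ ∧ (⊤ : Subgroup P).lowerCentralSeries 2 ≠ ⊥)
    (hZ : IsCyclic (Subgroup.center P))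
    (C : Subgroup P) (hC : C = Subgroup.centralizer (commutator P : Set P)) :
    C.index = (Subgroup.center P).relIndex (commutator P) := by
  exact stmt_10' (p := p) hclass3 hZ C hC
end

section
/- Let P be a Camina p-group of nilpotence class 3 with p odd and cyclic center Z(P). Then P' is elementary abelian. -/
open scoped Pointwise
open scoped commutatorElement IsMulCommutative

section CaminaAux

variable {G : Type*} [Group G]

private lemma mv {z : G} (hz : ∀ g : G, Commute z g) (g h : G) :
    g * (z * h) = z * (g * h) := by
  rw [← mul_assoc, ← (hz g).eq, mul_assoc]

private lemma mvn {z : G} (hz : ∀ g : G, Commute z g) (n : ℕ) (g h : G) :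
    g * (z^n * h) = z^n * (g * h) := by
  rw [← mul_assoc, ← ((hz g).pow_left n).eq, mul_assoc]

lemma camina_aux_xpow {z u x : G} (hz : ∀ g : G, Commute z g)
    (key : x * u = z * (u * x)) (n : ℕ) :
    x^n * u = z^n * (u * x^n) := by
  induction n with
  | zero => simp
  | succ n ih =>
    calc x^(n+1) * u = x * (x^n * u) := by rw [pow_succ']; rw [mul_assoc]
    _ = x * (z^n * (u * x^n)) := by rw [ih]
    _ = z^n * (x * (u * x^n)) := by rw [mvn hz]
    _ = z^n * ((x * u) * x^n) := by rw [mul_assoc]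
    _ = z^n * ((z * (u * x)) * x^n) := by rw [key]
    _ = z^(n+1) * (u * x^(n+1)) := by rw [pow_succ, pow_succ]; group

lemma camina_aux_pow {z u x : G} (hz : ∀ g : G, Commute z g)
    (key : x * u = z * (u * x)) (n : ℕ) :
    (u*x)^n = z^(n.choose 2) * (u^n * x^n) := by
  induction n with
  | zero => simp
  | succ n ih =>
    have hchoose : (n+1).choose 2 = n.choose 2 + n := by
      rw [Nat.choose_succ_succ, Nat.choose_one_right, Nat.add_comm]
    calc (u*x)^(n+1) = (u*x)^n * (u*x) := by rw [pow_succ]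
    _ = (z^(n.choose 2) * (u^n * x^n)) * (u*x) := by rw [ih]
    _ = z^(n.choose 2) * (u^n * ((x^n * u) * x)) := by group
    _ = z^(n.choose 2) * (u^n * ((z^n * (u * x^n)) * x)) := by
        rw [camina_aux_xpow hz key n]
    _ = z^(n.choose 2) * (u^n * (z^n * ((u * x^n) * x))) := by rw [mul_assoc]
    _ = z^(n.choose 2) * (z^n * (u^n * ((u * x^n) * x))) := by rw [mvn hz]
    _ = z^(n.choose 2 + n) * (u^(n+1) * x^(n+1)) := by
        rw [pow_add, pow_succ, pow_succ]; group
    _ = z^((n+1).choose 2) * (u^(n+1) * x^(n+1)) := by rw [hchoose]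

lemma camina_aux_comm_mul {z a b x : G} (hz : ∀ g : G, Commute z g)
    (hbx : b*x*b⁻¹*x⁻¹ = z) :
    (a*b)*x*(a*b)⁻¹*x⁻¹ = (a*x*a⁻¹*x⁻¹) * z := by
  have h1 : (a*b)*x*(a*b)⁻¹*x⁻¹ = a*((b*x*b⁻¹*x⁻¹)*(a⁻¹*(a*x*a⁻¹*x⁻¹))) := by group
  rw [h1, hbx, mv hz, ← (hz (a*x*a⁻¹*x⁻¹)).eq]
  group

lemma camina_aux_comm_mul_right {z x a b : G} (hz : ∀ g : G, Commute z g)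
    (hxb : x*b*x⁻¹*b⁻¹ = z) :
    x*(a*b)*x⁻¹*(a*b)⁻¹ = (x*a*x⁻¹*a⁻¹) * z := by
  have h1 : x*(a*b)*x⁻¹*(a*b)⁻¹ = (x*a*x⁻¹*a⁻¹)*(a*((x*b*x⁻¹*b⁻¹)*a⁻¹)) := by group
  rw [h1, hxb, mv hz, mul_inv_cancel, mul_one]

lemma camina_aux_choose {p : ℕ} (hodd : Odd p) (g : G)
    (hg : g^p = 1) : g^(p.choose 2) = 1 := by
  obtain ⟨k, hk⟩ := hodd
  have h1 : p - 1 = 2*k := by omega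
  have h2 : p.choose 2 = p * k := by
    rw [Nat.choose_two_right, h1, show p*(2*k) = (p*k)*2 by ring, Nat.mul_div_cancel _ (by norm_num)]
  rw [h2, pow_mul, hg, one_pow]

end CaminaAux
lemma camina_aux_conjpow {G : Type*} [Group G] (t x : G) (n : ℕ) :
    (t*x*t⁻¹)^n = t*x^n*t⁻¹ := by
  have := (MulAut.conj t).toMonoidHom.map_pow x n
  simpa [MulAut.conj_apply] using this.symm


/-- If `P` is a Camina `p`-group of nilpotence class 3 with `p` odd and cyclic
center, then `P'` is elementary abelian. -/
theorem stmt_12 {p : ℕ} [Fact p.Prime] (hodd : Odd p) {P : Type*} [Group P] [Finite P]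
    (hP : IsPGroup p P) (hCam : IsCamina P)
    (hclass3 : (⊤ : Subgroup P).lowerCentralSeries 3 = ⊥ ∧ (⊤ : Subgroup P).lowerCentralSeries 2 ≠ ⊥)
    (hZ : IsCyclic (Subgroup.center P)) :
    (∀ x ∈ commutator P, x ^ p = 1) ∧
      ∀ x ∈ commutator P, ∀ y ∈ commutator P, x * y = y * x := by
  obtain ⟨h3, h2⟩ := hclass3
  -- N := (⊤ : Subgroup P).lowerCentralSeries 2
  have hNdef : (⊤ : Subgroup P).lowerCentralSeries 2 = ⁅(commutator P), (⊤ : Subgroup P)⁆ := by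
    rw [show (2:ℕ) = 1 + 1 from rfl, Subgroup.lowerCentralSeries_succ, Subgroup.lowerCentralSeries_one]
  have hsucc3 : (⊤ : Subgroup P).lowerCentralSeries 3 = ⁅(⊤ : Subgroup P).lowerCentralSeries 2, (⊤ : Subgroup P)⁆ := by
    rw [show (3:ℕ) = 2 + 1 from rfl, Subgroup.lowerCentralSeries_succ]
  -- membership of commutators of G' elements
  have hmem : ∀ v ∈ commutator P, ∀ s : P, v*s*v⁻¹*s⁻¹ ∈ (⊤ : Subgroup P).lowerCentralSeries 2 := by
    intro v hv s
    rw [hNdef]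
    have := Subgroup.commutator_mem_commutator hv (Subgroup.mem_top s)
    rwa [commutatorElement_def] at this
  have hmemtt : ∀ a b : P, a*b*a⁻¹*b⁻¹ ∈ commutator P := by
    intro a b
    rw [commutator_def]
    have := Subgroup.commutator_mem_commutator (Subgroup.mem_top a) (Subgroup.mem_top b)
    rwa [commutatorElement_def] at this
  -- N is central
  have hcen : ∀ z ∈ (⊤ : Subgroup P).lowerCentralSeries 2, ∀ g : P, Commute z g := by
    intro z hzm g
    have : z*g*z⁻¹*g⁻¹ ∈ (⊤ : Subgroup P).lowerCentralSeries 3 := by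
      rw [show (3:ℕ) = 2 + 1 from rfl, Subgroup.lowerCentralSeries_succ]
      have := Subgroup.commutator_mem_commutator hzm (Subgroup.mem_top g)
      rwa [commutatorElement_def] at this
    rw [h3, Subgroup.mem_bot] at this
    have h' : ⁅z, g⁆ = 1 := by rwa [commutatorElement_def]
    exact commutatorElement_eq_one_iff_commute.mp h'
  have hNleG' : (⊤ : Subgroup P).lowerCentralSeries 2 ≤ commutator P := by
    rw [hNdef]; exact Subgroup.commutator_le_left _ _
  -- G' is abelian
  have habel : ∀ a ∈ commutator P, ∀ b ∈ commutator P, a * b = b * a := by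
    intro a ha b hb
    have hcenmem : ∀ g : P, a*g*a⁻¹*g⁻¹ ∈ Subgroup.center P := by
      intro g
      rw [Subgroup.mem_center_iff]
      intro g'
      exact ((hcen _ (hmem a ha g) g').eq).symm
    let f : P →* Subgroup.center P := MonoidHom.mk'
      (fun g => ⟨a*g*a⁻¹*g⁻¹, hcenmem g⟩)
      (by
        intro g1 g2
        ext
        exact camina_aux_comm_mul_right (fun g' => hcen _ (hmem a ha g2) g') rfl)
    have hker := Abelianization.commutator_subset_ker f hb
    rw [MonoidHom.mem_ker] at hker
    have h' : ⁅a, b⁆ = 1 := by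
      rw [commutatorElement_def]; exact congrArg Subtype.val hker
    exact commutatorElement_eq_one_iff_mul_comm.mp h'
  -- Camina surjectivity
  have hsurj : ∀ x : P, x ∉ commutator P → ∀ u ∈ commutator P,
      ∃ t : P, t*x*t⁻¹ = u*x := by
    intro x hx u hu
    have hset := hCam.2 x hx
    have hmem2 : u*x ∈ x • (commutator P : Set P) := by
      rw [Set.mem_smul_set_iff_inv_smul_mem]
      show x⁻¹ * (u*x) ∈ _
      have := (Subgroup.Normal.conj_mem inferInstance u hu x⁻¹)
      rw [inv_inv] at this
      convert this using 1
      group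
      exact Iff.rfl
    rw [← hset] at hmem2
    exact isConj_iff.mp hmem2
  -- element outside G'
  have hx0 : ∃ x : P, x ∉ commutator P := by
    by_contra hcon
    push_neg at hcon
    have htop : commutator P = ⊤ := by
      ext g; simp [hcon g]
    have h21 : (⊤ : Subgroup P).lowerCentralSeries 2 = ⊤ := by
      rw [hNdef, htop, ← commutator_def, htop]
    have h31 : (⊤ : Subgroup P).lowerCentralSeries 3 = ⊤ := by
      rw [hsucc3, h21, ← commutator_def, htop]
    rw [h3] at h31
    apply hCam.1
    intro a b
    have ha : a = 1 := by
      have : a ∈ (⊥ : Subgroup P) := h31 ▸ Subgroup.mem_top a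
      exact Subgroup.mem_bot.mp this
    simp [ha]
  -- second form of membership in N
  have hmem2 : ∀ u ∈ commutator P, ∀ s : P, s*u*s⁻¹*u⁻¹ ∈ (⊤ : Subgroup P).lowerCentralSeries 2 := by
    intro u hu s
    have hcc : (⊤ : Subgroup P).lowerCentralSeries 2 = ⁅(⊤ : Subgroup P), commutator P⁆ := by
      rw [hNdef, Subgroup.commutator_comm]
    rw [hcc]
    have := Subgroup.commutator_mem_commutator (Subgroup.mem_top s) hu
    rwa [commutatorElement_def] at this
  -- key conjugation formula
  have hkey : ∀ t x : P, ∃ z ∈ (⊤ : Subgroup P).lowerCentralSeries 2,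
      ∀ n : ℕ, t*x^n*t⁻¹ = z^(n.choose 2) * ((t*x*t⁻¹*x⁻¹)^n * x^n) := by
    intro t x
    set u := t*x*t⁻¹*x⁻¹ with hu
    refine ⟨x*u*x⁻¹*u⁻¹, hmem2 u (hmemtt t x) x, ?_⟩
    intro n
    have hz : ∀ g : P, Commute (x*u*x⁻¹*u⁻¹) g :=
      fun g => hcen _ (hmem2 u (hmemtt t x) x) g
    have hkey2 : x * u = (x*u*x⁻¹*u⁻¹) * (u * x) := by group
    calc t*x^n*t⁻¹ = (t*x*t⁻¹)^n := (camina_aux_conjpow t x n).symm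
    _ = (u*x)^n := by rw [hu]; group
    _ = (x*u*x⁻¹*u⁻¹)^(n.choose 2) * (u^n * x^n) := camina_aux_pow hz hkey2 n
  -- all p-th powers lie in G'
  have hpow : ∀ x : P, x^p ∈ commutator P := by
    intro x
    by_cases hx : x ∈ commutator P
    · exact pow_mem hx p
    by_contra hxp
    -- surjectivity of p-th power map on D := image of G' in P/N
    have hDpow : ∀ v ∈ commutator P, ∃ w ∈ commutator P,
        ((w : P ⧸ (⊤ : Subgroup P).lowerCentralSeries 2))^p = (v : P ⧸ (⊤ : Subgroup P).lowerCentralSeries 2) := by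
      intro v hv
      obtain ⟨t, ht⟩ := hsurj _ hxp v hv
      obtain ⟨z, hzN, hform⟩ := hkey t x
      have hform' : t*x^p*t⁻¹ = z^(p.choose 2) * ((t*x*t⁻¹*x⁻¹)^p * x^p) := hform p
      rw [ht] at hform'
      have hveq : v = z^(p.choose 2) * (t*x*t⁻¹*x⁻¹)^p := by
        have := hform'
        rw [← mul_assoc] at this
        exact mul_right_cancel this
      refine ⟨t*x*t⁻¹*x⁻¹, hmemtt t x, ?_⟩
      have hmkeq : ((z ^ p.choose 2 * (t*x*t⁻¹*x⁻¹) ^ p : P) : P ⧸ (⊤ : Subgroup P).lowerCentralSeries 2)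
          = ((t*x*t⁻¹*x⁻¹ : P) : P ⧸ (⊤ : Subgroup P).lowerCentralSeries 2) ^ p := by
        rw [QuotientGroup.mk_mul, QuotientGroup.mk_pow, QuotientGroup.mk_pow,
          (QuotientGroup.eq_one_iff z).mpr hzN, one_pow, one_mul]
      show ((t*x*t⁻¹*x⁻¹ : P) : P ⧸ (⊤ : Subgroup P).lowerCentralSeries 2)^p
          = ((v:P) : P ⧸ (⊤ : Subgroup P).lowerCentralSeries 2)
      rw [hveq, hmkeq]
    set D : Subgroup (P ⧸ (⊤ : Subgroup P).lowerCentralSeries 2) :=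
      (commutator P).map (QuotientGroup.mk' ((⊤ : Subgroup P).lowerCentralSeries 2)) with hD
    have hsurD : ∀ d : ↥D, ∃ e : ↥D, e^p = d := by
      rintro ⟨d, hd⟩
      obtain ⟨v, hv, rfl⟩ := Subgroup.mem_map.mp hd
      obtain ⟨w, hw, hwp⟩ := hDpow v hv
      refine ⟨⟨(w : P ⧸ (⊤ : Subgroup P).lowerCentralSeries 2), Subgroup.mem_map.mpr ⟨w, hw, rfl⟩⟩, ?_⟩
      ext
      push_cast
      exact hwp
    have hiter : ∀ (k : ℕ) (d : ↥D), ∃ e : ↥D, e^(p^k) = d := by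
      intro k
      induction k with
      | zero => intro d; exact ⟨d, by rw [pow_zero, pow_one]⟩
      | succ k ih =>
        intro d
        obtain ⟨e, he⟩ := hsurD d
        obtain ⟨f, hf⟩ := ih e
        exact ⟨f, by rw [pow_succ, pow_mul, hf, he]⟩
    have hDtriv : ∀ d : ↥D, d = 1 := by
      have hPD : IsPGroup p ↥D := (hP.to_quotient _).to_subgroup D
      obtain ⟨n, hn⟩ := hPD.exists_card_eq
      intro d
      obtain ⟨e, he⟩ := hiter n d
      rw [← he, ← hn, pow_card_eq_one']
    have hG'le : commutator P ≤ (⊤ : Subgroup P).lowerCentralSeries 2 := by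
      intro v hv
      have : ((v : P ⧸ (⊤ : Subgroup P).lowerCentralSeries 2)) = 1 := by
        have := hDtriv ⟨(v : P ⧸ (⊤ : Subgroup P).lowerCentralSeries 2),
          Subgroup.mem_map.mpr ⟨v, hv, rfl⟩⟩
        exact congrArg Subtype.val this
      exact (QuotientGroup.eq_one_iff v).mp this
    have hG'eq : commutator P = (⊤ : Subgroup P).lowerCentralSeries 2 := le_antisymm hG'le hNleG'
    apply h2
    have : (⊤ : Subgroup P).lowerCentralSeries 3 = (⊤ : Subgroup P).lowerCentralSeries 2 := by
      rw [hsucc3, ← hG'eq, ← hNdef]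
      exact hG'eq.symm
    rw [← this, h3]
  -- p-th powers of G' elements lie in N
  have hG'p : ∀ u ∈ commutator P, u^p ∈ (⊤ : Subgroup P).lowerCentralSeries 2 := by
    intro u hu
    obtain ⟨x₀, hx₀⟩ := hx0
    obtain ⟨t, ht⟩ := hsurj x₀ hx₀ u hu
    obtain ⟨z, hzN, hform⟩ := hkey t x₀
    have hueq : t*x₀*t⁻¹*x₀⁻¹ = u := by rw [ht]; group
    have hform' := hform p
    rw [hueq] at hform'
    have hwN : t*(x₀^p)*t⁻¹*(x₀^p)⁻¹ ∈ (⊤ : Subgroup P).lowerCentralSeries 2 :=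
      hmem2 _ (hpow x₀) t
    have hrw : t*(x₀^p)*t⁻¹ = (t*(x₀^p)*t⁻¹*(x₀^p)⁻¹) * x₀^p := by group
    rw [hrw] at hform'
    have hcancel : (t*(x₀^p)*t⁻¹*(x₀^p)⁻¹) = z^(p.choose 2) * u^p := by
      rw [← mul_assoc] at hform'
      exact mul_right_cancel hform'
    have hup : u^p = (z^(p.choose 2))⁻¹ * (t*(x₀^p)*t⁻¹*(x₀^p)⁻¹) := by
      rw [hcancel]; group
    rw [hup]
    exact Subgroup.mul_mem _ (Subgroup.inv_mem _ (Subgroup.pow_mem _ hzN _)) hwN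
  -- commutator power identity for v ∈ G'
  have hcp : ∀ v ∈ commutator P, ∀ s : P, ∀ n : ℕ,
      (v*s*v⁻¹*s⁻¹)^n = v^n*s*(v^n)⁻¹*s⁻¹ := by
    intro v hv s n
    induction n with
    | zero => simp
    | succ n ih =>
      have hzc : ∀ g : P, Commute (v^n*s*(v^n)⁻¹*s⁻¹) g :=
        fun g => hcen _ (hmem _ (pow_mem hv n) s) g
      have hmul := camina_aux_comm_mul (a := v) hzc rfl
      calc (v*s*v⁻¹*s⁻¹)^(n+1) = (v*s*v⁻¹*s⁻¹) * (v*s*v⁻¹*s⁻¹)^n := by rw [pow_succ']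
      _ = (v*s*v⁻¹*s⁻¹) * (v^n*s*(v^n)⁻¹*s⁻¹) := by rw [ih]
      _ = (v*v^n)*s*(v*v^n)⁻¹*s⁻¹ := hmul.symm
      _ = v^(n+1)*s*(v^(n+1))⁻¹*s⁻¹ := by rw [← pow_succ']
  -- N has exponent p
  have hNp : ∀ z ∈ (⊤ : Subgroup P).lowerCentralSeries 2, z^p = 1 := by
    let T : Subgroup P :=
      { carrier := {g : P | g ∈ Subgroup.center P ∧ g^p = 1}
        one_mem' := ⟨Subgroup.one_mem _, one_pow p⟩
        mul_mem' := by
          rintro a b ⟨haC, hap⟩ ⟨hbC, hbp⟩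
          refine ⟨Subgroup.mul_mem _ haC hbC, ?_⟩
          have hab : Commute a b := (Subgroup.mem_center_iff.mp haC b).symm
          rw [hab.mul_pow, hap, hbp, one_mul]
        inv_mem' := by
          rintro a ⟨haC, hap⟩
          exact ⟨Subgroup.inv_mem _ haC, by rw [inv_pow, hap, inv_one]⟩ }
    have hNT : (⊤ : Subgroup P).lowerCentralSeries 2 ≤ T := by
      rw [hNdef]
      refine Subgroup.commutator_le.mpr ?_
      intro v hv s _
      have h1 : ⁅v, s⁆ ∈ Subgroup.center P := by
        rw [Subgroup.mem_center_iff]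
        intro g
        exact ((hcen _ (hmem v hv s) g).eq).symm.trans rfl |>.symm ▸ rfl
      have h2 : ⁅v, s⁆^p = 1 := by
        rw [commutatorElement_def, hcp v hv s p]
        have hc := (hcen _ (hG'p v hv) s).eq
        rw [hc]; group
      exact ⟨h1, h2⟩
    intro z hz
    exact (hNT hz).2
  -- main exponent claim
  have hexp : ∀ u ∈ commutator P, u^p = 1 := by
    by_contra hcon
    push_neg at hcon
    obtain ⟨u₀, hu₀, hu₀p⟩ := hcon
    obtain ⟨x₀, hx₀⟩ := hx0
    -- p-th powers of elements outside G' are not in N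
    have hxpnotN : ∀ x : P, x ∉ commutator P → x^p ∉ (⊤ : Subgroup P).lowerCentralSeries 2 := by
      intro x hx hmemN
      obtain ⟨t, ht⟩ := hsurj x hx u₀ hu₀
      obtain ⟨z, hzN, hform⟩ := hkey t x
      have hueq : t*x*t⁻¹*x⁻¹ = u₀ := by rw [ht]; group
      have hform' := hform p
      rw [hueq, camina_aux_choose hodd z (hNp z hzN), one_mul] at hform'
      have hcentral : t*x^p*t⁻¹ = x^p := by
        rw [← ((hcen _ hmemN t).eq)]; group
      rw [hcentral] at hform'
      apply hu₀p
      have : (1:P) * x^p = u₀^p * x^p := by rw [one_mul]; exact hform'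
      exact (mul_right_cancel this).symm
    -- the p-th power map is a homomorphism on Q := P ⧸ N
    have hQmul : ∀ a b : P ⧸ (⊤ : Subgroup P).lowerCentralSeries 2, (a*b)^p = a^p*b^p := by
      intro a b
      refine QuotientGroup.induction_on a (fun g => QuotientGroup.induction_on b (fun h => ?_))
      have hw : h*g*h⁻¹*g⁻¹ ∈ commutator P := hmemtt h g
      have hzc : ∀ q : P ⧸ (⊤ : Subgroup P).lowerCentralSeries 2,
          Commute ((h*g*h⁻¹*g⁻¹ : P) : P ⧸ (⊤ : Subgroup P).lowerCentralSeries 2) q := by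
        intro q
        refine QuotientGroup.induction_on q (fun s => ?_)
        have h1 : ((h*g*h⁻¹*g⁻¹ : P) : P ⧸ (⊤ : Subgroup P).lowerCentralSeries 2) * (s : P)
            * ((h*g*h⁻¹*g⁻¹ : P) : P ⧸ (⊤ : Subgroup P).lowerCentralSeries 2)⁻¹ * ((s:P) : P ⧸ (⊤ : Subgroup P).lowerCentralSeries 2)⁻¹
            = (((h*g*h⁻¹*g⁻¹)*s*(h*g*h⁻¹*g⁻¹)⁻¹*s⁻¹ : P) : P ⧸ (⊤ : Subgroup P).lowerCentralSeries 2) := rfl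
        have h2 : (((h*g*h⁻¹*g⁻¹)*s*(h*g*h⁻¹*g⁻¹)⁻¹*s⁻¹ : P) : P ⧸ (⊤ : Subgroup P).lowerCentralSeries 2) = 1 :=
          (QuotientGroup.eq_one_iff _).mpr (hmem _ hw s)
        have h3 : ⁅((h*g*h⁻¹*g⁻¹ : P) : P ⧸ (⊤ : Subgroup P).lowerCentralSeries 2), ((s:P) : P ⧸ (⊤ : Subgroup P).lowerCentralSeries 2)⁆ = 1 := by
          rw [commutatorElement_def, h1, h2]
        exact commutatorElement_eq_one_iff_commute.mp h3
      have hzp : ((h*g*h⁻¹*g⁻¹ : P) : P ⧸ (⊤ : Subgroup P).lowerCentralSeries 2)^p = 1 := by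
        rw [← QuotientGroup.mk_pow]
        exact (QuotientGroup.eq_one_iff _).mpr (hG'p _ hw)
      have keyP : (h*g : P) = (h*g*h⁻¹*g⁻¹)*(g*h) := by group
      have key : ((h:P) : P ⧸ (⊤ : Subgroup P).lowerCentralSeries 2) * ((g:P) : P ⧸ (⊤ : Subgroup P).lowerCentralSeries 2)
          = ((h*g*h⁻¹*g⁻¹ : P) : P ⧸ (⊤ : Subgroup P).lowerCentralSeries 2)
            * (((g:P) : P ⧸ (⊤ : Subgroup P).lowerCentralSeries 2) * ((h:P) : P ⧸ (⊤ : Subgroup P).lowerCentralSeries 2)) := by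
        rw [← QuotientGroup.mk_mul, ← QuotientGroup.mk_mul, ← QuotientGroup.mk_mul]
        exact congrArg _ keyP
      have := camina_aux_pow hzc key p
      rw [camina_aux_choose hodd _ hzp, one_mul] at this
      exact this
    -- the p-th power homomorphism on Q
    set π : (P ⧸ (⊤ : Subgroup P).lowerCentralSeries 2) →* (P ⧸ (⊤ : Subgroup P).lowerCentralSeries 2) :=
      MonoidHom.mk' (fun q => q^p) hQmul with hπ
    set D : Subgroup (P ⧸ (⊤ : Subgroup P).lowerCentralSeries 2) :=
      (commutator P).map (QuotientGroup.mk' ((⊤ : Subgroup P).lowerCentralSeries 2)) with hD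
    have hmkD : ∀ v : P, v ∈ commutator P →
        ((v : P) : P ⧸ (⊤ : Subgroup P).lowerCentralSeries 2) ∈ D := by
      intro v hv
      exact Subgroup.mem_map.mpr ⟨v, hv, rfl⟩
    have hker : π.ker = D := by
      ext q
      constructor
      · intro hq
        rw [MonoidHom.mem_ker] at hq
        obtain ⟨g, rfl⟩ := QuotientGroup.mk'_surjective ((⊤ : Subgroup P).lowerCentralSeries 2) q
        have hgp : g^p ∈ (⊤ : Subgroup P).lowerCentralSeries 2 := by
          rw [← QuotientGroup.eq_one_iff, QuotientGroup.mk_pow]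
          exact hq
        by_cases hg : g ∈ commutator P
        · exact hmkD g hg
        · exact absurd hgp (hxpnotN g hg)
      · intro hq
        obtain ⟨v, hv, rfl⟩ := Subgroup.mem_map.mp hq
        rw [MonoidHom.mem_ker]
        show ((v : P) : P ⧸ (⊤ : Subgroup P).lowerCentralSeries 2)^p = 1
        rw [← QuotientGroup.mk_pow]
        exact (QuotientGroup.eq_one_iff _).mpr (hG'p v hv)
    have hran : π.range ≤ D := by
      rintro _ ⟨q, rfl⟩
      obtain ⟨g, rfl⟩ := QuotientGroup.mk'_surjective ((⊤ : Subgroup P).lowerCentralSeries 2) q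
      show ((g : P) : P ⧸ (⊤ : Subgroup P).lowerCentralSeries 2)^p ∈ D
      rw [← QuotientGroup.mk_pow]
      exact hmkD _ (hpow g)
    -- cardinalities
    set m := Nat.card ↥((⊤ : Subgroup P).lowerCentralSeries 2) with hm
    set d := Nat.card ↥D with hd
    have hmpos : 0 < m := Nat.card_pos
    have hdpos : 0 < d := Nat.card_pos
    -- |Q| ≤ d * d
    have hQle : Nat.card (P ⧸ (⊤ : Subgroup P).lowerCentralSeries 2) ≤ d * d := by
      have e1 : Nat.card (P ⧸ (⊤ : Subgroup P).lowerCentralSeries 2)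
          = Nat.card (_ ⧸ π.ker) * Nat.card π.ker :=
        Subgroup.card_eq_card_quotient_mul_card_subgroup π.ker
      have e2 : Nat.card ((P ⧸ (⊤ : Subgroup P).lowerCentralSeries 2) ⧸ π.ker) = Nat.card π.range :=
        Nat.card_congr (QuotientGroup.quotientKerEquivRange π).toEquiv
      have e3 : Nat.card π.range ≤ d := Subgroup.card_le_of_le hran
      have e4 : Nat.card π.ker = d := by rw [hker]
      calc Nat.card (P ⧸ (⊤ : Subgroup P).lowerCentralSeries 2)
          = Nat.card π.range * Nat.card π.ker := by rw [e1, e2]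
      _ ≤ d * d := by rw [e4]; exact Nat.mul_le_mul_right d e3
    have hPcard : Nat.card P = Nat.card (P ⧸ (⊤ : Subgroup P).lowerCentralSeries 2) * m :=
      Subgroup.card_eq_card_quotient_mul_card_subgroup _
    have hPle : Nat.card P ≤ d * d * m := by
      rw [hPcard]
      exact Nat.mul_le_mul_right m hQle
    -- |G'| = d * m
    have hG'card : Nat.card ↥(commutator P) = d * m := by
      set f : ↥(commutator P) →* (P ⧸ (⊤ : Subgroup P).lowerCentralSeries 2) :=
        (QuotientGroup.mk' ((⊤ : Subgroup P).lowerCentralSeries 2)).comp (commutator P).subtype with hf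
      have hfr : f.range = D := by
        rw [hf, ← MonoidHom.map_range, Subgroup.range_subtype]
      have hcardker : Nat.card f.ker = m := by
        refine Nat.card_congr ?_
        refine ⟨fun w => ⟨(w.1 : P), ?_⟩, fun n => ⟨⟨n.1, hNleG' n.2⟩, ?_⟩, ?_, ?_⟩
        · have := w.2
          rw [MonoidHom.mem_ker] at this
          exact (QuotientGroup.eq_one_iff _).mp this
        · rw [MonoidHom.mem_ker]
          show ((n.1 : P) : P ⧸ (⊤ : Subgroup P).lowerCentralSeries 2) = 1
          exact (QuotientGroup.eq_one_iff _).mpr n.2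
        · intro w; ext; rfl
        · intro n; ext; rfl
      calc Nat.card ↥(commutator P)
          = Nat.card (_ ⧸ f.ker) * Nat.card f.ker :=
            Subgroup.card_eq_card_quotient_mul_card_subgroup f.ker
      _ = Nat.card f.range * Nat.card f.ker :=
            by rw [Nat.card_congr (QuotientGroup.quotientKerEquivRange f).toEquiv]
      _ = d * m := by rw [hfr, hcardker]
    -- orbit-stabilizer for x₀
    have horb : Nat.card P = Nat.card ↥(MulAction.orbit (ConjAct P) x₀)
        * Nat.card ↥(MulAction.stabilizer (ConjAct P) x₀) := by
      have e1 : Nat.card (ConjAct P)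
          = Nat.card (ConjAct P ⧸ MulAction.stabilizer (ConjAct P) x₀)
            * Nat.card ↥(MulAction.stabilizer (ConjAct P) x₀) :=
        Subgroup.card_eq_card_quotient_mul_card_subgroup _
      have e2 : Nat.card ↥(MulAction.orbit (ConjAct P) x₀)
          = Nat.card (ConjAct P ⧸ MulAction.stabilizer (ConjAct P) x₀) :=
        Nat.card_congr (MulAction.orbitEquivQuotientStabilizer (ConjAct P) x₀)
      have e3 : Nat.card (ConjAct P) = Nat.card P :=
        Nat.card_congr (ConjAct.toConjAct (G := P)).toEquiv.symm
      rw [← e3, e1, e2]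
    -- the orbit of x₀ is the coset x₀ • G'
    have horbcard : Nat.card ↥(MulAction.orbit (ConjAct P) x₀) = d * m := by
      have hset : MulAction.orbit (ConjAct P) x₀ = x₀ • (commutator P : Set P) := by
        ext y
        rw [ConjAct.mem_orbit_conjAct, isConj_comm, ← hCam.2 x₀ hx₀]
        exact Iff.rfl
      rw [hset, Set.natCard_smul_set x₀ (commutator P : Set P)]
      exact hG'card
    -- the commutator-with-x₀ homomorphism on G'
    set φ : ↥(commutator P) →* ↥((⊤ : Subgroup P).lowerCentralSeries 2) :=
      MonoidHom.mk' (fun v => ⟨(v:P)*x₀*(v:P)⁻¹*x₀⁻¹, hmem _ v.2 x₀⟩) (by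
        intro a b
        ext
        show ((a:P)*(b:P))*x₀*((a:P)*(b:P))⁻¹*x₀⁻¹
            = ((a:P)*x₀*(a:P)⁻¹*x₀⁻¹) * ((b:P)*x₀*(b:P)⁻¹*x₀⁻¹)
        exact camina_aux_comm_mul (fun g => hcen _ (hmem _ b.2 x₀) g) rfl) with hφ
    have hkerφ : d ≤ Nat.card ↥φ.ker := by
      have e5 : Nat.card ↥(commutator P) = Nat.card φ.range * Nat.card φ.ker := by
        rw [Subgroup.card_eq_card_quotient_mul_card_subgroup φ.ker,
          Nat.card_congr (QuotientGroup.quotientKerEquivRange φ).toEquiv]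
      have e6 : Nat.card φ.range ≤ m := Subgroup.card_le_card_group _
      have e7 : d * m ≤ Nat.card ↥φ.ker * m := by
        calc d * m = Nat.card ↥(commutator P) := hG'card.symm
        _ = Nat.card φ.range * Nat.card φ.ker := e5
        _ ≤ m * Nat.card ↥φ.ker := Nat.mul_le_mul_right _ e6
        _ = Nat.card ↥φ.ker * m := Nat.mul_comm _ _
      exact Nat.le_of_mul_le_mul_right e7 hmpos
    -- inject the kernel into the stabilizer
    set L : Subgroup (ConjAct P) :=
      (φ.ker.map (commutator P).subtype).map
        (ConjAct.toConjAct : P ≃* ConjAct P).toMonoidHom with hL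
    have hLcard : Nat.card ↥L = Nat.card ↥φ.ker := by
      have e8 := Nat.card_congr
        (Subgroup.equivMapOfInjective φ.ker (commutator P).subtype
          (commutator P).subtype_injective).toEquiv
      have e9 := Nat.card_congr
        (Subgroup.equivMapOfInjective (φ.ker.map (commutator P).subtype)
          (ConjAct.toConjAct : P ≃* ConjAct P).toMonoidHom
          (MulEquiv.injective _)).toEquiv
      rw [hL, ← e9, ← e8]
    have hLst : L ≤ MulAction.stabilizer (ConjAct P) x₀ := by
      rintro c hc
      obtain ⟨y, hy, rfl⟩ := Subgroup.mem_map.mp hc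
      obtain ⟨w, hw, rfl⟩ := Subgroup.mem_map.mp hy
      rw [MulAction.mem_stabilizer_iff, ConjAct.smul_def]
      have hco : ConjAct.ofConjAct ((ConjAct.toConjAct : P ≃* ConjAct P).toMonoidHom
          ((commutator P).subtype w)) = (w : P) := ConjAct.ofConjAct_toConjAct _
      rw [hco]
      rw [MonoidHom.mem_ker] at hw
      have h9 : (w:P)*x₀*(w:P)⁻¹*x₀⁻¹ = 1 := congrArg Subtype.val hw
      calc (w:P)*x₀*(w:P)⁻¹ = ((w:P)*x₀*(w:P)⁻¹*x₀⁻¹)*x₀ := by group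
      _ = x₀ := by rw [h9, one_mul]
    have hxstab : ConjAct.toConjAct x₀ ∈ MulAction.stabilizer (ConjAct P) x₀ := by
      rw [MulAction.mem_stabilizer_iff, ConjAct.smul_def, ConjAct.ofConjAct_toConjAct]
      group
    have hxnotL : ConjAct.toConjAct x₀ ∉ L := by
      intro hmem'
      obtain ⟨y, hy, heq⟩ := Subgroup.mem_map.mp hmem'
      have hyx : y = x₀ := (ConjAct.toConjAct : P ≃* ConjAct P).injective heq
      apply hx₀
      rw [← hyx]
      exact Subgroup.map_subtype_le _ hy
    haveI : Finite (ConjAct P) := Finite.of_equiv P (ConjAct.toConjAct (G := P)).toEquiv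
    have hstabcard : d + 1 ≤ Nat.card ↥(MulAction.stabilizer (ConjAct P) x₀) := by
      have hss : (L : Set (ConjAct P)) ⊂ (MulAction.stabilizer (ConjAct P) x₀ : Set (ConjAct P)) := by
        rw [Set.ssubset_iff_subset_ne]
        refine ⟨hLst, ?_⟩
        intro hEq
        apply hxnotL
        have : ConjAct.toConjAct x₀ ∈ (L : Set (ConjAct P)) := by rw [hEq]; exact hxstab
        exact this
      have hlt := Set.ncard_lt_ncard hss (Set.toFinite _)
      have q1 : Nat.card ↥L = (L : Set (ConjAct P)).ncard := Nat.card_coe_set_eq _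
      have q2 : Nat.card ↥(MulAction.stabilizer (ConjAct P) x₀)
          = (MulAction.stabilizer (ConjAct P) x₀ : Set (ConjAct P)).ncard :=
        Nat.card_coe_set_eq _
      rw [← q1, ← q2, hLcard] at hlt
      omega
    -- final contradiction
    have hbig : (d*m) * (d+1) ≤ Nat.card P := by
      rw [horb, horbcard]
      exact Nat.mul_le_mul_left _ hstabcard
    nlinarith [hPle, hbig, Nat.mul_pos hdpos hmpos]
  exact ⟨hexp, habel⟩
end

section
/- Let P be a Camina p-group of nilpotence class 2. Then P' is elementary abelian. -/
open scoped Pointwise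

/-- If `P` is a Camina `p`-group of nilpotence class 2, then `P'` is
elementary abelian. -/
theorem stmt_13 {p : ℕ} [Fact p.Prime] {P : Type*} [Group P] [Finite P]
    (hP : IsPGroup p P) (hCam : IsCamina P)
    (hclass2 : commutator P ≤ Subgroup.center P) :
    (∀ x ∈ commutator P, x ^ p = 1) ∧
      ∀ x ∈ commutator P, ∀ y ∈ commutator P, x * y = y * x := by
  obtain ⟨hna, hconj⟩ := hCam
  have hZ : ∀ c ∈ commutator P, ∀ g : P, g * c = c * g := fun c hc g =>
    Subgroup.mem_center_iff.mp (hclass2 hc) g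
  refine ⟨?_, fun x hx y hy => (hZ x hx y).symm⟩
  -- there is an element outside the derived subgroup
  obtain ⟨x₀, hx₀⟩ : ∃ x : P, x ∉ commutator P := by
    by_contra h
    push_neg at h
    exact hna fun a b => (hZ a (h a) b).symm
  -- key : p-th powers land in the derived subgroup
  have key : ∀ x : P, x ∉ commutator P → x ^ p ∈ commutator P := by
    intro x hx
    by_contra hxp
    -- the p-power map is surjective on the commutator subgroup
    have hsurj : ∀ d ∈ commutator P, ∃ c ∈ commutator P, c ^ p = d := by
      intro d hd
      have h1 : x ^ p * d ∈ {y : P | IsConj (x ^ p) y} := by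
        rw [hconj _ hxp]
        exact ⟨d, hd, rfl⟩
      obtain ⟨g, hg⟩ := isConj_iff.mp h1
      have h2 : g * x * g⁻¹ ∈ x • (commutator P : Set P) := by
        rw [← hconj x hx]
        exact isConj_iff.mpr ⟨g, rfl⟩
      obtain ⟨c, hc, hcx⟩ := h2
      simp only [smul_eq_mul] at hcx
      refine ⟨c, hc, ?_⟩
      have hcomm : Commute x c := hZ c hc x
      have h3 : (x * c) ^ p = x ^ p * d := by rw [hcx, conj_pow, hg]
      rw [hcomm.mul_pow] at h3
      exact mul_left_cancel h3
    -- the commutator subgroup is nontrivial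
    have hne : commutator P ≠ ⊥ := by
      intro hbot
      apply hna
      intro a b
      open scoped commutatorElement in
      have : ⁅a, b⁆ ∈ commutator P := Subgroup.commutator_mem_commutator
        (Subgroup.mem_top a) (Subgroup.mem_top b)
      rw [hbot, Subgroup.mem_bot, commutatorElement_eq_one_iff_mul_comm] at this
      exact this
    obtain ⟨a, ha⟩ := Subgroup.ne_bot_iff_exists_ne_one.mp hne
    have hc : (a : P) ∈ commutator P := a.2
    have hc1 : (a : P) ≠ 1 := fun h => ha (Subtype.ext h)
    set c : P := (a : P)
    -- produce an element of order p in the commutator subgroup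
    obtain ⟨k, hk⟩ := hP c
    have hkpos : ∃ n, c ^ p ^ n = 1 := ⟨k, hk⟩
    classical
    have hm : c ^ p ^ Nat.find hkpos = 1 := Nat.find_spec hkpos
    have hmpos : Nat.find hkpos ≠ 0 := by
      intro h0
      apply hc1
      simpa [h0] using hm
    set d := c ^ p ^ (Nat.find hkpos - 1) with hd
    have hdne : d ≠ 1 :=
      Nat.find_min hkpos (Nat.sub_lt (Nat.pos_of_ne_zero hmpos) one_pos)
    have hdp : d ^ p = 1 := by
      rw [hd, ← pow_mul, ← pow_succ, Nat.sub_add_cancel (Nat.one_le_iff_ne_zero.mpr hmpos)]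
      exact hm
    have hdmem : d ∈ commutator P := Subgroup.pow_mem _ hc _
    -- the p-power map on the commutator subgroup as a monoid hom
    let φ : (commutator P) →* (commutator P) :=
      { toFun := fun a => ⟨(a : P) ^ p, Subgroup.pow_mem _ a.2 p⟩
        map_one' := by simp
        map_mul' := by
          intro a b
          ext
          push_cast
          exact Commute.mul_pow (hZ _ b.2 a) p }
    have hφsurj : Function.Surjective φ := by
      intro e
      obtain ⟨c', hc', hce⟩ := hsurj e e.2
      exact ⟨⟨c', hc'⟩, Subtype.ext hce⟩
    have hφinj : Function.Injective φ := Finite.injective_iff_surjective.mpr hφsurj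
    have : (⟨d, hdmem⟩ : commutator P) = 1 := by
      apply hφinj
      ext
      simpa [φ] using hdp
    exact hdne (congrArg Subtype.val this)
  -- now conclude: every element of the commutator subgroup has order dividing p
  intro c hc
  have h1 : x₀ * c ∈ {y : P | IsConj x₀ y} := by
    rw [hconj _ hx₀]
    exact ⟨c, hc, rfl⟩
  obtain ⟨g, hg⟩ := isConj_iff.mp h1
  have hcomm : Commute x₀ c := hZ c hc x₀
  have h3 : g * x₀ ^ p * g⁻¹ = (g * x₀ * g⁻¹) ^ p := (conj_pow).symm
  rw [hg, hcomm.mul_pow] at h3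
  have h4 : g * x₀ ^ p * g⁻¹ = x₀ ^ p := by
    rw [hZ _ (key x₀ hx₀) g, mul_inv_cancel_right]
  rw [h4] at h3
  exact mul_left_cancel (h3.symm.trans (mul_one _).symm)
end
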